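/- For every n ≥ 1 and k, h ∈ ℕ and all words w, w', u ∈ A* with |u| ≤ h: if wu ≼_{k+h} w'u (with respect to Σ_n(<)) then w ≼_k w'. -/

import Mathlib

universe u

/-- First-order formulas over words on alphabet `A`, in the signature of `Σ_n(<)`:
letter tests `a(x)`, linear order `x < y` and equality; variables are indexed by `ℕ`. -/
inductive FO (A : Type*) : Type _
  | letter : A → ℕ → FO A
  | lt : ℕ → ℕ → FO A
  | eq : ℕ → ℕ → FO A
  | not : FO A → FO A
  | or : FO A → FO A → FO A
  | and : FO A → FO A → FO A
  | ex : ℕ → FO A → FO A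
  | all : ℕ → FO A → FO A

/-- Quantifier-free formulas. -/
inductive FO.QF {A : Type*} : FO A → Prop
  | letter (a : A) (v : ℕ) : QF (.letter a v)
  | lt (v v' : ℕ) : QF (.lt v v')
  | eq (v v' : ℕ) : QF (.eq v v')
  | not {f} : QF f → QF f.not
  | or {f g} : QF f → QF g → QF (f.or g)
  | and {f g} : QF f → QF g → QF (f.and g)

mutual
/-- `Σ_n` formulas: prenex formulas whose quantifiers form at most `n` alternating
blocks, starting with an existential block. -/
inductive FO.Sig {A : Type u} : ℕ → FO A → Prop
  | ofQF {n : ℕ} {f : FO A} : FO.QF f → FO.Sig n f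
  | ofPi {n : ℕ} {f : FO A} : FO.Pi n f → FO.Sig (n + 1) f
  | ex {n : ℕ} {v : ℕ} {f : FO A} : FO.Sig (n + 1) f → FO.Sig (n + 1) (.ex v f)

/-- `Π_n` formulas: prenex formulas whose quantifiers form at most `n` alternating
blocks, starting with a universal block. -/
inductive FO.Pi {A : Type u} : ℕ → FO A → Prop
  | ofQF {n : ℕ} {f : FO A} : FO.QF f → FO.Pi n f
  | ofSig {n : ℕ} {f : FO A} : FO.Sig n f → FO.Pi (n + 1) f
  | all {n : ℕ} {v : ℕ} {f : FO A} : FO.Pi (n + 1) f → FO.Pi (n + 1) (.all v f)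
end

/-- Free variables. -/
def FO.free {A : Type*} : FO A → Set ℕ
  | .letter _ v => {v}
  | .lt v v' => {v, v'}
  | .eq v v' => {v, v'}
  | .not f => f.free
  | .or f g => f.free ∪ g.free
  | .and f g => f.free ∪ g.free
  | .ex v f => f.free \ {v}
  | .all v f => f.free \ {v}

/-- Quantifier rank. -/
def FO.rank {A : Type*} : FO A → ℕ
  | .letter _ _ => 0
  | .lt _ _ => 0
  | .eq _ _ => 0
  | .not f => f.rank
  | .or f g => max f.rank g.rank
  | .and f g => max f.rank g.rank
  | .ex _ f => f.rank + 1
  | .all _ f => f.rank + 1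

/-- Satisfaction in a finite word `w` (positions `0, …, |w|-1`) under an assignment. -/
def FO.Sat {A : Type*} (w : List A) : (ℕ → ℕ) → FO A → Prop
  | ν, .letter a v => ∃ h : ν v < w.length, w.get ⟨ν v, h⟩ = a
  | ν, .lt v v' => ν v < ν v'
  | ν, .eq v v' => ν v = ν v'
  | ν, .not f => ¬ f.Sat w ν
  | ν, .or f g => f.Sat w ν ∨ g.Sat w ν
  | ν, .and f g => f.Sat w ν ∧ g.Sat w ν
  | ν, .ex v f => ∃ p : ℕ, p < w.length ∧ f.Sat w (Function.update ν v p)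
  | ν, .all v f => ∀ p : ℕ, p < w.length → f.Sat w (Function.update ν v p)

/-- `w ≼ₖ w'` for `Σ_n(<)`: every `Σ_n(<)` sentence of quantifier rank at most `k`
satisfied by `w` is satisfied by `w'`. -/
def SigLe {A : Type*} (n k : ℕ) (w w' : List A) : Prop :=
  ∀ f : FO A, FO.Sig n f → f.free = ∅ → f.rank ≤ k →
    (f.Sat w fun _ => 0) → (f.Sat w' fun _ => 0)

section Aux
open Classical
variable {A : Type*}

/-- Bound (binder) variables. -/
def FO.bset {A : Type*} : FO A → Set ℕ
  | .ex v f => insert v f.bset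
  | .all v f => insert v f.bset
  | .not f => f.bset
  | .or f g => f.bset ∪ g.bset
  | .and f g => f.bset ∪ g.bset
  | _ => ∅

/-- Strictly increasing binders along paths. -/
def FO.SB {A : Type*} : FO A → Prop
  | .ex v f => (∀ x ∈ f.bset, v < x) ∧ f.SB
  | .all v f => (∀ x ∈ f.bset, v < x) ∧ f.SB
  | _ => True

/-- Prenex shape. -/
def FO.Prenex {A : Type*} : FO A → Prop
  | .ex _ f => f.Prenex
  | .all _ f => f.Prenex
  | f => f.QF

/-- Contains a universal quantifier (for prenex formulas). -/
def FO.hasAll {A : Type*} : FO A → Prop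
  | .ex _ f => f.hasAll
  | .all _ _ => True
  | _ => False

lemma FO.Sat_congr {w : List A} : ∀ {f : FO A} {ν ν' : ℕ → ℕ},
    (∀ v ∈ f.free, ν v = ν' v) → (f.Sat w ν ↔ f.Sat w ν')
  | .letter a v, ν, ν', h => by
      simp only [FO.Sat, h v (by simp [FO.free])]
  | .lt v v', ν, ν', h => by
      simp only [FO.Sat, h v (by simp [FO.free]), h v' (by simp [FO.free])]
  | .eq v v', ν, ν', h => by
      simp only [FO.Sat, h v (by simp [FO.free]), h v' (by simp [FO.free])]
  | .not f, ν, ν', h => by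
      simp only [FO.Sat]; rw [FO.Sat_congr (f := f) h]
  | .or f g, ν, ν', h => by
      simp only [FO.Sat]
      rw [FO.Sat_congr (f := f) fun v hv => h v (Set.mem_union_left _ hv),
        FO.Sat_congr (f := g) fun v hv => h v (Set.mem_union_right _ hv)]
  | .and f g, ν, ν', h => by
      simp only [FO.Sat]
      rw [FO.Sat_congr (f := f) fun v hv => h v (Set.mem_union_left _ hv),
        FO.Sat_congr (f := g) fun v hv => h v (Set.mem_union_right _ hv)]
  | .ex v f, ν, ν', h => by
      simp only [FO.Sat]
      refine exists_congr fun p => and_congr_right fun _ => FO.Sat_congr fun x hx => ?_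
      rcases eq_or_ne x v with rfl | hxv
      · simp [Function.update]
      · simp only [Function.update_of_ne hxv]
        exact h x (by exact ⟨hx, hxv⟩)
  | .all v f, ν, ν', h => by
      simp only [FO.Sat]
      refine forall_congr' fun p => imp_congr_right fun _ => FO.Sat_congr fun x hx => ?_
      rcases eq_or_ne x v with rfl | hxv
      · simp [Function.update]
      · simp only [Function.update_of_ne hxv]
        exact h x (by exact ⟨hx, hxv⟩)

/-- QF formulas transfer between a word and its prefix, if all relevant
positions are in the prefix. -/
lemma FO.qf_take {W : List A} {b : ℕ} (hb : b ≤ W.length) :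
    ∀ {f : FO A}, f.QF → ∀ {ν : ℕ → ℕ}, (∀ v ∈ f.free, ν v < b) →
      (f.Sat (W.take b) ν ↔ f.Sat W ν) := by
  intro f hf
  induction hf with
  | letter a v =>
      intro ν hν
      have hv : ν v < b := hν v (by simp [FO.free])
      have hlen : (W.take b).length = b := by simp [List.length_take, Nat.min_eq_left hb]
      have h1 : ν v < (W.take b).length := by omega
      have h2 : ν v < W.length := by omega
      have hget : (W.take b).get ⟨ν v, h1⟩ = W.get ⟨ν v, h2⟩ := by
        simp [List.get_eq_getElem, List.getElem_take]
      constructor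
      · rintro ⟨h, rfl⟩
        refine ⟨h2, ?_⟩
        rw [show (⟨ν v, h⟩ : Fin (W.take b).length) = ⟨ν v, h1⟩ from rfl, hget]
      · rintro ⟨h, rfl⟩
        refine ⟨h1, ?_⟩
        rw [hget]
  | lt v v' => intro ν _; simp [FO.Sat]
  | eq v v' => intro ν _; simp [FO.Sat]
  | not h ih =>
      intro ν hν
      simp only [FO.Sat]
      rw [ih hν]
  | or h1 h2 ih1 ih2 =>
      intro ν hν
      simp only [FO.Sat]
      rw [ih1 fun v hv => hν v (Set.mem_union_left _ hv),
        ih2 fun v hv => hν v (Set.mem_union_right _ hv)]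
  | and h1 h2 ih1 ih2 =>
      intro ν hν
      simp only [FO.Sat]
      rw [ih1 fun v hv => hν v (Set.mem_union_left _ hv),
        ih2 fun v hv => hν v (Set.mem_union_right _ hv)]

end Aux
section Aux2
variable {A : Type*}

/-- A formula is a quantifier node or not. -/
def FO.isQuant {A : Type*} : FO A → Prop
  | .ex _ _ => True
  | .all _ _ => True
  | _ => False

lemma FO.sig_pi_qf : ∀ (n : ℕ) (f : FO A), ¬ f.isQuant →
    (FO.Sig n f → f.QF) ∧ (FO.Pi n f → f.QF) := by
  intro n
  induction n with
  | zero =>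
      intro f hf
      constructor
      · intro h; cases h with
        | ofQF h => exact h
      · intro h; cases h with
        | ofQF h => exact h
  | succ n ih =>
      intro f hf
      constructor
      · intro h; cases h with
        | ofQF h => exact h
        | ofPi h => exact (ih f hf).2 h
        | ex h => exact absurd trivial hf
      · intro h; cases h with
        | ofQF h => exact h
        | ofSig h => exact (ih f hf).1 h
        | all h => exact absurd trivial hf

lemma FO.QF.prenex : ∀ {f : FO A}, f.QF → f.Prenex := by
  intro f hf
  cases hf <;> simp [FO.Prenex] <;> constructor <;> assumption

lemma FO.sig_pi_prenex : ∀ (n : ℕ) (f : FO A),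
    (FO.Sig n f → f.Prenex) ∧ (FO.Pi n f → f.Prenex) := by
  intro n
  induction n with
  | zero =>
      intro f
      refine ⟨fun h => ?_, fun h => ?_⟩
      · cases h with
        | ofQF h => exact h.prenex
      · cases h with
        | ofQF h => exact h.prenex
  | succ n ih =>
      intro f
      induction f with
      | ex v f ihf =>
          refine ⟨fun h => ?_, fun h => ?_⟩
          · cases h with
            | ofQF h => exact h.prenex
            | ofPi h => exact (ih _).2 h
            | ex h => exact ihf.1 h
          · cases h with
            | ofQF h => exact h.prenex
            | ofSig h => exact (ih _).1 h
      | all v f ihf =>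
          refine ⟨fun h => ?_, fun h => ?_⟩
          · cases h with
            | ofQF h => exact h.prenex
            | ofPi h => exact (ih _).2 h
          · cases h with
            | ofQF h => exact h.prenex
            | ofSig h => exact (ih _).1 h
            | all h => exact ihf.2 h
      | _ =>
          refine ⟨fun h => ?_, fun h => ?_⟩
          · exact ((FO.sig_pi_qf _ _ (by simp [FO.isQuant])).1 h).prenex
          · exact ((FO.sig_pi_qf _ _ (by simp [FO.isQuant])).2 h).prenex

end Aux2
section Aux3
variable {A : Type*}

/-- Canonical renaming making all binders distinct and ≥ `d`. -/
def FO.canon {A : Type*} : FO A → (ℕ → ℕ) → ℕ → FO A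
  | .letter a v, σ, _ => .letter a (σ v)
  | .lt v w, σ, _ => .lt (σ v) (σ w)
  | .eq v w, σ, _ => .eq (σ v) (σ w)
  | .not f, σ, d => .not (f.canon σ d)
  | .or f g, σ, d => .or (f.canon σ d) (g.canon σ d)
  | .and f g, σ, d => .and (f.canon σ d) (g.canon σ d)
  | .ex v f, σ, d => .ex d (f.canon (Function.update σ v d) (d+1))
  | .all v f, σ, d => .all d (f.canon (Function.update σ v d) (d+1))

lemma FO.canon_sat {w : List A} : ∀ (f : FO A) (σ : ℕ → ℕ) (d : ℕ),
    (∀ v, σ v < d) → ∀ (ν : ℕ → ℕ),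
    ((f.canon σ d).Sat w ν ↔ f.Sat w (ν ∘ σ)) := by
  intro f
  induction f with
  | letter a v => intro σ d hσ ν; simp [FO.canon, FO.Sat, Function.comp]
  | lt v v' => intro σ d hσ ν; simp [FO.canon, FO.Sat, Function.comp]
  | eq v v' => intro σ d hσ ν; simp [FO.canon, FO.Sat, Function.comp]
  | not f ihf => intro σ d hσ ν; simp only [FO.canon, FO.Sat]; rw [ihf σ d hσ ν]
  | or f g ihf ihg => intro σ d hσ ν; simp only [FO.canon, FO.Sat]; rw [ihf σ d hσ ν, ihg σ d hσ ν]
  | and f g ihf ihg => intro σ d hσ ν; simp only [FO.canon, FO.Sat]; rw [ihf σ d hσ ν, ihg σ d hσ ν]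
  | ex v f ihf =>
      intro σ d hσ ν
      simp only [FO.canon, FO.Sat]
      refine exists_congr fun p => and_congr_right fun _ => ?_
      rw [ihf (Function.update σ v d) (d+1) (fun u => by
        rcases eq_or_ne u v with rfl | hu
        · simp [Function.update]
        · simp only [Function.update_of_ne hu]; exact (hσ u).trans (Nat.lt_succ_self d)) (Function.update ν d p)]
      refine FO.Sat_congr fun x _ => ?_
      rcases eq_or_ne x v with rfl | hx
      · simp [Function.comp]
      · rw [Function.comp_apply, Function.update_of_ne hx, Function.update_of_ne hx,
          Function.comp_apply, Function.update_of_ne (Nat.ne_of_lt (hσ x))]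
  | all v f ihf =>
      intro σ d hσ ν
      simp only [FO.canon, FO.Sat]
      refine forall_congr' fun p => imp_congr_right fun _ => ?_
      rw [ihf (Function.update σ v d) (d+1) (fun u => by
        rcases eq_or_ne u v with rfl | hu
        · simp [Function.update]
        · simp only [Function.update_of_ne hu]; exact (hσ u).trans (Nat.lt_succ_self d)) (Function.update ν d p)]
      refine FO.Sat_congr fun x _ => ?_
      rcases eq_or_ne x v with rfl | hx
      · simp [Function.comp]
      · rw [Function.comp_apply, Function.update_of_ne hx, Function.update_of_ne hx,
          Function.comp_apply, Function.update_of_ne (Nat.ne_of_lt (hσ x))]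

lemma FO.canon_free : ∀ (f : FO A) (σ : ℕ → ℕ) (d : ℕ),
    (∀ v, σ v < d) → (f.canon σ d).free ⊆ σ '' f.free := by
  intro f
  induction f with
  | letter a v => intro σ d hσ; simp [FO.canon, FO.free]
  | lt v v' =>
      intro σ d hσ
      simp only [FO.canon, FO.free]
      rintro x (rfl | rfl)
      exacts [⟨v, by simp⟩, ⟨v', by simp⟩]
  | eq v v' =>
      intro σ d hσ
      simp only [FO.canon, FO.free]
      rintro x (rfl | rfl)
      exacts [⟨v, by simp⟩, ⟨v', by simp⟩]
  | not f ihf => intro σ d hσ; exact ihf σ d hσ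
  | or f g ihf ihg =>
      intro σ d hσ
      simp only [FO.canon, FO.free]
      refine Set.union_subset ?_ ?_
      · exact (ihf σ d hσ).trans (Set.image_mono (Set.subset_union_left))
      · exact (ihg σ d hσ).trans (Set.image_mono (Set.subset_union_right))
  | and f g ihf ihg =>
      intro σ d hσ
      simp only [FO.canon, FO.free]
      refine Set.union_subset ?_ ?_
      · exact (ihf σ d hσ).trans (Set.image_mono (Set.subset_union_left))
      · exact (ihg σ d hσ).trans (Set.image_mono (Set.subset_union_right))
  | ex v f ihf =>
      intro σ d hσ
      simp only [FO.canon, FO.free]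
      rintro x ⟨hx, hxd⟩
      have hσ' : ∀ u, Function.update σ v d u < d + 1 := fun u => by
        rcases eq_or_ne u v with rfl | hu
        · simp [Function.update]
        · simp only [Function.update_of_ne hu]; exact (hσ u).trans (Nat.lt_succ_self d)
      obtain ⟨y, hy, hyx⟩ := ihf _ _ hσ' hx
      have hyv : y ≠ v := by
        rintro rfl
        simp only [Function.update_self] at hyx
        exact hxd (by simp [← hyx])
      refine ⟨y, ⟨hy, hyv⟩, ?_⟩
      rwa [Function.update_of_ne hyv] at hyx
  | all v f ihf =>
      intro σ d hσ
      simp only [FO.canon, FO.free]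
      rintro x ⟨hx, hxd⟩
      have hσ' : ∀ u, Function.update σ v d u < d + 1 := fun u => by
        rcases eq_or_ne u v with rfl | hu
        · simp [Function.update]
        · simp only [Function.update_of_ne hu]; exact (hσ u).trans (Nat.lt_succ_self d)
      obtain ⟨y, hy, hyx⟩ := ihf _ _ hσ' hx
      have hyv : y ≠ v := by
        rintro rfl
        simp only [Function.update_self] at hyx
        exact hxd (by simp [← hyx])
      refine ⟨y, ⟨hy, hyv⟩, ?_⟩
      rwa [Function.update_of_ne hyv] at hyx

lemma FO.canon_rank : ∀ (f : FO A) (σ : ℕ → ℕ) (d : ℕ), (f.canon σ d).rank = f.rank := by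
  intro f
  induction f <;> intro σ d <;> simp [FO.canon, FO.rank, *]

lemma FO.canon_bset : ∀ (f : FO A) (σ : ℕ → ℕ) (d : ℕ),
    ∀ x ∈ (f.canon σ d).bset, d ≤ x := by
  intro f
  induction f with
  | ex v f ihf =>
      intro σ d x hx
      simp only [FO.canon, FO.bset, Set.mem_insert_iff] at hx
      rcases hx with rfl | hx
      · exact le_refl x
      · exact (Nat.le_succ d).trans (ihf _ _ x hx)
  | all v f ihf =>
      intro σ d x hx
      simp only [FO.canon, FO.bset, Set.mem_insert_iff] at hx
      rcases hx with rfl | hx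
      · exact le_refl x
      · exact (Nat.le_succ d).trans (ihf _ _ x hx)
  | not f ihf => intro σ d x hx; exact ihf _ _ x hx
  | or f g ihf ihg =>
      intro σ d x hx
      rcases hx with hx | hx
      exacts [ihf _ _ x hx, ihg _ _ x hx]
  | and f g ihf ihg =>
      intro σ d x hx
      rcases hx with hx | hx
      exacts [ihf _ _ x hx, ihg _ _ x hx]
  | _ => intro σ d x hx; simp [FO.canon, FO.bset] at hx

lemma FO.canon_SB : ∀ (f : FO A) (σ : ℕ → ℕ) (d : ℕ), (f.canon σ d).SB := by
  intro f
  induction f with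
  | ex v f ihf =>
      intro σ d
      exact ⟨fun x hx => Nat.lt_of_succ_le (FO.canon_bset _ _ _ x hx), ihf _ _⟩
  | all v f ihf =>
      intro σ d
      exact ⟨fun x hx => Nat.lt_of_succ_le (FO.canon_bset _ _ _ x hx), ihf _ _⟩
  | not f ihf => intro σ d; exact trivial
  | or f g ihf ihg => intro σ d; exact trivial
  | and f g ihf ihg => intro σ d; exact trivial
  | _ => intro σ d; exact trivial

lemma FO.QF.canon_qf : ∀ {f : FO A}, f.QF → ∀ (σ : ℕ → ℕ) (d : ℕ), (f.canon σ d).QF := by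
  intro f hf
  induction hf with
  | letter a v => intro σ d; exact .letter _ _
  | lt v v' => intro σ d; exact .lt _ _
  | eq v v' => intro σ d; exact .eq _ _
  | not h ih => intro σ d; exact .not (ih σ d)
  | or h1 h2 ih1 ih2 => intro σ d; exact .or (ih1 σ d) (ih2 σ d)
  | and h1 h2 ih1 ih2 => intro σ d; exact .and (ih1 σ d) (ih2 σ d)

lemma FO.canon_sig_pi : ∀ (n : ℕ) (f : FO A) (σ : ℕ → ℕ) (d : ℕ),
    (FO.Sig n f → FO.Sig n (f.canon σ d)) ∧ (FO.Pi n f → FO.Pi n (f.canon σ d)) := by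
  intro n
  induction n with
  | zero =>
      intro f σ d
      refine ⟨fun h => ?_, fun h => ?_⟩
      · cases h with | ofQF h => exact .ofQF (h.canon_qf σ d)
      · cases h with | ofQF h => exact .ofQF (h.canon_qf σ d)
  | succ n ih =>
      intro f
      induction f with
      | ex v f ihf =>
          intro σ d
          refine ⟨fun h => ?_, fun h => ?_⟩
          · cases h with
            | ofQF h => exact .ofQF (h.canon_qf σ d)
            | ofPi h => exact .ofPi ((ih _ σ d).2 h)
            | ex h => exact .ex ((ihf _ _).1 h)
          · cases h with
            | ofQF h => exact .ofQF (h.canon_qf σ d)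
            | ofSig h => exact .ofSig ((ih _ σ d).1 h)
      | all v f ihf =>
          intro σ d
          refine ⟨fun h => ?_, fun h => ?_⟩
          · cases h with
            | ofQF h => exact .ofQF (h.canon_qf σ d)
            | ofPi h => exact .ofPi ((ih _ σ d).2 h)
          · cases h with
            | ofQF h => exact .ofQF (h.canon_qf σ d)
            | ofSig h => exact .ofSig ((ih _ σ d).1 h)
            | all h => exact .all ((ihf _ _).2 h)
      | _ =>
          intro σ d
          refine ⟨fun h => ?_, fun h => ?_⟩
          · exact .ofQF ((FO.sig_pi_qf _ _ (by simp [FO.isQuant])).1 h |>.canon_qf σ d)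
          · exact .ofQF ((FO.sig_pi_qf _ _ (by simp [FO.isQuant])).2 h |>.canon_qf σ d)

end Aux3
section Aux4
open Classical
variable {A : Type*}

/-- `y₁ < y₂ < … < y_m` where `yᵢ` is variable `i`. -/
def chainF (A : Type*) (m : ℕ) : FO A :=
  (List.range' 1 (m-1)).foldr (fun i acc => (FO.lt i (i+1)).and acc) (FO.eq 1 1)

/-- `v < y₁ ∨ v = y₁ ∨ … ∨ v = y_m`. -/
def pinF (A : Type*) (m v : ℕ) : FO A :=
  (List.range' 1 m).foldr (fun i acc => (FO.eq v i).or acc) (FO.lt v 1)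

def guardsF (E : List ℕ) (M : FO A) : FO A :=
  E.foldr (fun a acc => (FO.lt a 1).and acc) M

def hypF (Al : List ℕ) (M : FO A) : FO A :=
  Al.foldr (fun a acc => ((FO.lt a 1).not).or acc) M

def exsF (l : List ℕ) (f : FO A) : FO A := l.foldr (fun i acc => FO.ex i acc) f

/-- Relativization below the first universal quantifier. -/
def Gt (m : ℕ) (X : FO A) : FO A → List ℕ → List ℕ → FO A
  | .ex v f, E, Al => .ex v (Gt m X f (v::E) Al)
  | .all v f, E, Al => .all v (Gt m X f E (v::Al))
  | M, E, Al => (chainF A m).and (X.and (hypF Al (guardsF E M)))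

/-- Relativization of a prenex formula. -/
def Tt (m : ℕ) : FO A → List ℕ → FO A
  | .ex v f, E => .ex v (Tt m f (v::E))
  | .all v f, E => .all v (Gt m (pinF A m v) f E [v])
  | M, E => (chainF A m).and (guardsF E M)

/- Syntactic lemmas -/

lemma chainF_qf (m : ℕ) : (chainF A m).QF := by
  unfold chainF
  induction List.range' 1 (m-1) with
  | nil => exact .eq _ _
  | cons a l ih => exact .and (.lt _ _) ih

lemma pinF_qf (m v : ℕ) : (pinF A m v).QF := by
  unfold pinF
  induction List.range' 1 m with
  | nil => exact .lt _ _
  | cons a l ih => exact .or (.eq _ _) ih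

lemma guardsF_qf {E : List ℕ} {M : FO A} (hM : M.QF) : (guardsF E M).QF := by
  unfold guardsF
  induction E with
  | nil => exact hM
  | cons a l ih => exact .and (.lt _ _) ih

lemma hypF_qf {Al : List ℕ} {M : FO A} (hM : M.QF) : (hypF Al M).QF := by
  unfold hypF
  induction Al with
  | nil => exact hM
  | cons a l ih => exact .or (.not (.lt _ _)) ih

lemma chainF_rank (m : ℕ) : (chainF A m).rank = 0 := by
  unfold chainF
  induction List.range' 1 (m-1) with
  | nil => rfl
  | cons a l ih => simp [FO.rank, ih]

lemma pinF_rank (m v : ℕ) : (pinF A m v).rank = 0 := by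
  unfold pinF
  induction List.range' 1 m with
  | nil => rfl
  | cons a l ih => simp [FO.rank, ih]

lemma guardsF_rank {E : List ℕ} {M : FO A} : (guardsF E M).rank = M.rank := by
  unfold guardsF
  induction E with
  | nil => rfl
  | cons a l ih => simp [FO.rank, ih]

lemma hypF_rank {Al : List ℕ} {M : FO A} : (hypF Al M).rank = M.rank := by
  unfold hypF
  induction Al with
  | nil => rfl
  | cons a l ih => simp [FO.rank, ih]

lemma exsF_rank {l : List ℕ} {f : FO A} : (exsF l f).rank = l.length + f.rank := by
  unfold exsF
  induction l with
  | nil => simp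
  | cons a l ih => simp [FO.rank, ih]; omega

lemma Gt_rank {m : ℕ} {X : FO A} (hX : X.rank = 0) :
    ∀ (f : FO A) (E Al : List ℕ), (Gt m X f E Al).rank = f.rank := by
  intro f
  induction f with
  | ex v f ih => intro E Al; simp [Gt, FO.rank, ih]
  | all v f ih => intro E Al; simp [Gt, FO.rank, ih]
  | _ => intro E Al; simp [Gt, FO.rank, chainF_rank, hX, guardsF_rank, hypF_rank]

lemma Tt_rank {m : ℕ} : ∀ (f : FO A) (E : List ℕ), (Tt m f E).rank = f.rank := by
  intro f
  induction f with
  | ex v f ih => intro E; simp [Tt, FO.rank, ih]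
  | all v f ih => intro E; simp [Tt, FO.rank, Gt_rank (pinF_rank m v)]
  | _ => intro E; simp [Tt, FO.rank, chainF_rank, guardsF_rank]

lemma chainF_free {m : ℕ} (hm : 1 ≤ m) : (chainF A m).free ⊆ {x | 1 ≤ x ∧ x ≤ m} := by
  unfold chainF
  have key : ∀ l : List ℕ, (∀ i ∈ l, 1 ≤ i ∧ i + 1 ≤ m) →
      ((l.foldr (fun i acc => (FO.lt i (i+1)).and acc) (FO.eq 1 1) : FO A)).free
        ⊆ {x | 1 ≤ x ∧ x ≤ m} := by
    intro l
    induction l with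
    | nil =>
        intro _
        simp only [List.foldr_nil, FO.free]
        rintro x (rfl | rfl) <;> exact ⟨le_refl 1, hm⟩
    | cons a l ih =>
        intro hl
        simp only [List.foldr_cons, FO.free]
        refine Set.union_subset ?_ (ih fun i hi => hl i (List.mem_cons_of_mem _ hi))
        have := hl a (List.mem_cons_self)
        rintro x (rfl | rfl) <;> simp only [Set.mem_setOf_eq] <;> omega
  refine key _ fun i hi => ?_
  rw [List.mem_range'_1] at hi
  omega

lemma pinF_free {m v : ℕ} (hm : 1 ≤ m) :
    (pinF A m v).free ⊆ insert v {x | 1 ≤ x ∧ x ≤ m} := by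
  unfold pinF
  have key : ∀ l : List ℕ, (∀ i ∈ l, 1 ≤ i ∧ i ≤ m) →
      ((l.foldr (fun i acc => (FO.eq v i).or acc) (FO.lt v 1) : FO A)).free
        ⊆ insert v {x | 1 ≤ x ∧ x ≤ m} := by
    intro l
    induction l with
    | nil =>
        intro _
        simp only [List.foldr_nil, FO.free]
        rintro x (rfl | rfl)
        · exact Set.mem_insert _ _
        · exact Set.mem_insert_of_mem _ ⟨le_refl 1, hm⟩
    | cons a l ih =>
        intro hl
        simp only [List.foldr_cons, FO.free]
        refine Set.union_subset ?_ (ih fun i hi => hl i (List.mem_cons_of_mem _ hi))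
        have := hl a (List.mem_cons_self)
        rintro x (rfl | rfl)
        · exact Set.mem_insert _ _
        · exact Set.mem_insert_of_mem _ (by simpa using this)
  refine key _ fun i hi => ?_
  rw [List.mem_range'_1] at hi
  omega

lemma guardsF_free {E : List ℕ} {M : FO A} :
    (guardsF E M).free ⊆ M.free ∪ {x | x ∈ E} ∪ {1} := by
  unfold guardsF
  induction E with
  | nil => intro x hx; exact Or.inl (Or.inl hx)
  | cons a l ih =>
      simp only [List.foldr_cons, FO.free]
      intro x hx
      rcases hx with hx | hx
      · rcases hx with rfl | rfl
        · exact Or.inl (Or.inr (by simp))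
        · exact Or.inr rfl
      · rcases ih hx with (h | h) | h
        · exact Or.inl (Or.inl h)
        · refine Or.inl (Or.inr ?_)
          simp only [Set.mem_setOf_eq] at h ⊢
          exact List.mem_cons_of_mem _ h
        · exact Or.inr h

lemma hypF_free {Al : List ℕ} {M : FO A} :
    (hypF Al M).free ⊆ M.free ∪ {x | x ∈ Al} ∪ {1} := by
  unfold hypF
  induction Al with
  | nil => intro x hx; exact Or.inl (Or.inl hx)
  | cons a l ih =>
      simp only [List.foldr_cons, FO.free]
      intro x hx
      rcases hx with hx | hx
      · rcases hx with rfl | rfl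
        · exact Or.inl (Or.inr (by simp))
        · exact Or.inr rfl
      · rcases ih hx with (h | h) | h
        · exact Or.inl (Or.inl h)
        · refine Or.inl (Or.inr ?_)
          simp only [Set.mem_setOf_eq] at h ⊢
          exact List.mem_cons_of_mem _ h
        · exact Or.inr h

lemma exsF_free {l : List ℕ} {f : FO A} :
    (exsF l f).free ⊆ f.free \ {x | x ∈ l} := by
  unfold exsF
  induction l with
  | nil => simp
  | cons a l ih =>
      simp only [List.foldr_cons, FO.free]
      intro x hx
      rcases hx with ⟨hx, hxa⟩
      rcases ih hx with ⟨h1, h2⟩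
      refine ⟨h1, ?_⟩
      simp only [Set.mem_setOf_eq] at hxa h2 ⊢
      intro hc
      rcases List.mem_cons.1 hc with rfl | hc
      · exact hxa rfl
      · exact h2 hc

lemma Gt_free {m : ℕ} {X : FO A} (hm : 1 ≤ m) :
    ∀ (f : FO A) (E Al : List ℕ),
      (Gt m X f E Al).free ⊆
        f.free ∪ {x | x ∈ E} ∪ {x | x ∈ Al} ∪ X.free ∪ {x | 1 ≤ x ∧ x ≤ m} := by
  intro f
  induction f with
  | ex v f ih =>
      intro E Al
      show ((Gt m X f (v::E) Al).free \ {v}) ⊆ _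
      intro x hx
      rcases hx with ⟨hx, hxv⟩
      simp only [Set.mem_singleton_iff] at hxv
      rcases ih (v::E) Al hx with (((h | h) | h) | h) | h
      · exact Or.inl (Or.inl (Or.inl (Or.inl ⟨h, hxv⟩)))
      · simp only [Set.mem_setOf_eq, List.mem_cons] at h
        rcases h with rfl | h
        · exact absurd rfl hxv
        · exact Or.inl (Or.inl (Or.inl (Or.inr h)))
      · exact Or.inl (Or.inl (Or.inr h))
      · exact Or.inl (Or.inr h)
      · exact Or.inr h
  | all v f ih =>
      intro E Al
      show ((Gt m X f E (v::Al)).free \ {v}) ⊆ _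
      intro x hx
      rcases hx with ⟨hx, hxv⟩
      simp only [Set.mem_singleton_iff] at hxv
      rcases ih E (v::Al) hx with (((h | h) | h) | h) | h
      · exact Or.inl (Or.inl (Or.inl (Or.inl ⟨h, hxv⟩)))
      · exact Or.inl (Or.inl (Or.inl (Or.inr h)))
      · simp only [Set.mem_setOf_eq, List.mem_cons] at h
        rcases h with rfl | h
        · exact absurd rfl hxv
        · exact Or.inl (Or.inl (Or.inr h))
      · exact Or.inl (Or.inr h)
      · exact Or.inr h
  | _ =>
      intro E Al
      show ((chainF A m).free ∪ (X.free ∪ (hypF Al (guardsF E _)).free)) ⊆ _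
      intro x hx
      rcases hx with hx | hx | hx
      · exact Or.inr (chainF_free hm hx)
      · exact Or.inl (Or.inr hx)
      · rcases hypF_free hx with (h | h) | h
        · rcases guardsF_free h with (h | h) | h
          · exact Or.inl (Or.inl (Or.inl (Or.inl h)))
          · exact Or.inl (Or.inl (Or.inl (Or.inr h)))
          · simp only [Set.mem_singleton_iff] at h; subst h; exact Or.inr ⟨le_refl 1, hm⟩
        · exact Or.inl (Or.inl (Or.inr h))
        · simp only [Set.mem_singleton_iff] at h; subst h; exact Or.inr ⟨le_refl 1, hm⟩

lemma Tt_free {m : ℕ} (hm : 1 ≤ m) :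
    ∀ (f : FO A) (E : List ℕ),
      (Tt m f E).free ⊆ f.free ∪ {x | x ∈ E} ∪ {x | 1 ≤ x ∧ x ≤ m} := by
  intro f
  induction f with
  | ex v f ih =>
      intro E
      show ((Tt m f (v::E)).free \ {v}) ⊆ _
      intro x hx
      rcases hx with ⟨hx, hxv⟩
      simp only [Set.mem_singleton_iff] at hxv
      rcases ih (v::E) hx with ((h | h) | h)
      · exact Or.inl (Or.inl ⟨h, hxv⟩)
      · simp only [Set.mem_setOf_eq, List.mem_cons] at h
        rcases h with rfl | h
        · exact absurd rfl hxv
        · exact Or.inl (Or.inr h)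
      · exact Or.inr h
  | all v f ih =>
      intro E
      show ((Gt m (pinF A m v) f E [v]).free \ {v}) ⊆ _
      intro x hx
      rcases hx with ⟨hx, hxv⟩
      simp only [Set.mem_singleton_iff] at hxv
      rcases Gt_free hm f E [v] hx with (((h | h) | h) | h) | h
      · exact Or.inl (Or.inl ⟨h, hxv⟩)
      · exact Or.inl (Or.inr h)
      · simp only [Set.mem_setOf_eq, List.mem_cons] at h
        rcases h with rfl | h
        · exact absurd rfl hxv
        · exact absurd h List.not_mem_nil
      · rcases pinF_free hm h with rfl | h
        · exact absurd rfl hxv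
        · exact Or.inr h
      · exact Or.inr h
  | _ =>
      intro E
      show ((chainF A m).free ∪ (guardsF E _).free) ⊆ _
      intro x hx
      rcases hx with hx | hx
      · exact Or.inr (chainF_free hm hx)
      · rcases guardsF_free hx with (h | h) | h
        · exact Or.inl (Or.inl h)
        · exact Or.inl (Or.inr h)
        · simp only [Set.mem_singleton_iff] at h; subst h; exact Or.inr ⟨le_refl 1, hm⟩

end Aux4
section Aux5
variable {A : Type*}

lemma Gt_matrix_qf {m : ℕ} {X M : FO A} (hX : X.QF) (hM : M.QF) (E Al : List ℕ) :
    ((chainF A m).and (X.and (hypF Al (guardsF E M)))).QF :=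
  .and (chainF_qf m) (.and hX (hypF_qf (guardsF_qf hM)))

lemma Gt_sig_pi {m : ℕ} {X : FO A} (hX : X.QF) : ∀ (n : ℕ) (f : FO A) (E Al : List ℕ),
    (FO.Sig n f → FO.Sig n (Gt m X f E Al)) ∧ (FO.Pi n f → FO.Pi n (Gt m X f E Al)) := by
  intro n
  induction n with
  | zero =>
      intro f E Al
      constructor
      · intro h; cases h with
        | ofQF h =>
            cases h <;> exact .ofQF (Gt_matrix_qf hX (by constructor <;> assumption) _ _)
      · intro h; cases h with
        | ofQF h =>
            cases h <;> exact .ofQF (Gt_matrix_qf hX (by constructor <;> assumption) _ _)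
  | succ n ih =>
      intro f
      induction f with
      | ex v f ihf =>
          intro E Al
          refine ⟨fun h => ?_, fun h => ?_⟩
          · cases h with
            | ofQF h => cases h
            | ofPi h => exact .ofPi ((ih _ E Al).2 h)
            | ex h => exact .ex ((ihf (v::E) Al).1 h)
          · cases h with
            | ofQF h => cases h
            | ofSig h => exact .ofSig ((ih _ E Al).1 h)
      | all v f ihf =>
          intro E Al
          refine ⟨fun h => ?_, fun h => ?_⟩
          · cases h with
            | ofQF h => cases h
            | ofPi h => exact .ofPi ((ih _ E Al).2 h)
          · cases h with
            | ofQF h => cases h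
            | ofSig h => exact .ofSig ((ih _ E Al).1 h)
            | all h => exact .all ((ihf E (v::Al)).2 h)
      | _ =>
          intro E Al
          refine ⟨fun h => ?_, fun h => ?_⟩
          · exact .ofQF (Gt_matrix_qf hX ((FO.sig_pi_qf _ _ (by simp [FO.isQuant])).1 h) _ _)
          · exact .ofQF (Gt_matrix_qf hX ((FO.sig_pi_qf _ _ (by simp [FO.isQuant])).2 h) _ _)

lemma Tt_sig_pi {m : ℕ} : ∀ (n : ℕ) (f : FO A) (E : List ℕ),
    (FO.Sig n f → FO.Sig n (Tt m f E)) ∧ (FO.Pi n f → FO.Pi n (Tt m f E)) := by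
  intro n
  induction n with
  | zero =>
      intro f E
      constructor
      · intro h; cases h with
        | ofQF h =>
            cases h <;>
              exact .ofQF (.and (chainF_qf m) (guardsF_qf (by constructor <;> assumption)))
      · intro h; cases h with
        | ofQF h =>
            cases h <;>
              exact .ofQF (.and (chainF_qf m) (guardsF_qf (by constructor <;> assumption)))
  | succ n ih =>
      intro f
      induction f with
      | ex v f ihf =>
          intro E
          refine ⟨fun h => ?_, fun h => ?_⟩
          · cases h with
            | ofQF h => cases h
            | ofPi h => exact .ofPi ((ih _ E).2 h)
            | ex h => exact .ex ((ihf (v::E)).1 h)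
          · cases h with
            | ofQF h => cases h
            | ofSig h => exact .ofSig ((ih _ E).1 h)
      | all v f ihf =>
          intro E
          refine ⟨fun h => ?_, fun h => ?_⟩
          · cases h with
            | ofQF h => cases h
            | ofPi h => exact .ofPi ((ih _ E).2 h)
          · cases h with
            | ofQF h => cases h
            | ofSig h => exact .ofSig ((ih _ E).1 h)
            | all h => exact .all ((Gt_sig_pi (pinF_qf m v) (n+1) f E [v]).2 h)
      | _ =>
          intro E
          refine ⟨fun h => ?_, fun h => ?_⟩
          · exact .ofQF (.and (chainF_qf m)
              (guardsF_qf ((FO.sig_pi_qf _ _ (by simp [FO.isQuant])).1 h)))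
          · exact .ofQF (.and (chainF_qf m)
              (guardsF_qf ((FO.sig_pi_qf _ _ (by simp [FO.isQuant])).2 h)))

lemma exsF_sig {n : ℕ} {f : FO A} (h : FO.Sig (n+1) f) (l : List ℕ) :
    FO.Sig (n+1) (exsF l f) := by
  unfold exsF
  induction l with
  | nil => exact h
  | cons a l ih => exact .ex ih

end Aux5
section Aux6
open Classical
variable {A : Type*}

lemma chainF_sat_iff {w : List A} {m : ℕ} {ν : ℕ → ℕ} :
    (chainF A m).Sat w ν ↔ ∀ i, 1 ≤ i → i + 1 ≤ m → ν i < ν (i+1) := by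
  unfold chainF
  have key : ∀ l : List ℕ,
      ((l.foldr (fun i acc => (FO.lt i (i+1)).and acc) (FO.eq 1 1) : FO A)).Sat w ν ↔
        ∀ i ∈ l, ν i < ν (i+1) := by
    intro l
    induction l with
    | nil => simp [FO.Sat]
    | cons a l ih =>
        simp only [List.foldr_cons, FO.Sat, ih, List.mem_cons]
        constructor
        · rintro ⟨h1, h2⟩ i (rfl | hi)
          exacts [h1, h2 i hi]
        · intro h
          exact ⟨h a (Or.inl rfl), fun i hi => h i (Or.inr hi)⟩
  rw [key]
  constructor
  · intro h i h1 h2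
    exact h i (by rw [List.mem_range'_1]; omega)
  · intro h i hi
    rw [List.mem_range'_1] at hi
    exact h i (by omega) (by omega)

lemma pinF_sat_iff {w : List A} {m v : ℕ} {ν : ℕ → ℕ} :
    (pinF A m v).Sat w ν ↔ ν v < ν 1 ∨ ∃ i, 1 ≤ i ∧ i ≤ m ∧ ν v = ν i := by
  unfold pinF
  have key : ∀ l : List ℕ,
      ((l.foldr (fun i acc => (FO.eq v i).or acc) (FO.lt v 1) : FO A)).Sat w ν ↔
        (∃ i ∈ l, ν v = ν i) ∨ ν v < ν 1 := by
    intro l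
    induction l with
    | nil => simp [FO.Sat]
    | cons a l ih =>
        simp only [List.foldr_cons, FO.Sat, ih, List.mem_cons]
        constructor
        · rintro (h | (⟨i, hi, he⟩ | h))
          exacts [Or.inl ⟨a, Or.inl rfl, h⟩, Or.inl ⟨i, Or.inr hi, he⟩, Or.inr h]
        · rintro (⟨i, (rfl | hi), he⟩ | h)
          exacts [Or.inl he, Or.inr (Or.inl ⟨i, hi, he⟩), Or.inr (Or.inr h)]
  rw [key]
  constructor
  · rintro (⟨i, hi, he⟩ | h)
    · rw [List.mem_range'_1] at hi
      exact Or.inr ⟨i, by omega, by omega, he⟩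
    · exact Or.inl h
  · rintro (h | ⟨i, h1, h2, he⟩)
    · exact Or.inr h
    · exact Or.inl ⟨i, by rw [List.mem_range'_1]; omega, he⟩

lemma guardsF_sat_iff {w : List A} {E : List ℕ} {M : FO A} {ν : ℕ → ℕ} :
    (guardsF E M).Sat w ν ↔ (∀ a ∈ E, ν a < ν 1) ∧ M.Sat w ν := by
  unfold guardsF
  induction E with
  | nil => simp
  | cons a l ih =>
      simp only [List.foldr_cons, FO.Sat, ih, List.mem_cons]
      constructor
      · rintro ⟨h1, h2, h3⟩
        exact ⟨fun b hb => by rcases hb with rfl | hb; exacts [h1, h2 b hb], h3⟩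
      · rintro ⟨h1, h2⟩
        exact ⟨h1 a (Or.inl rfl), fun b hb => h1 b (Or.inr hb), h2⟩

lemma hypF_sat_iff {w : List A} {Al : List ℕ} {M : FO A} {ν : ℕ → ℕ} :
    (hypF Al M).Sat w ν ↔ ((∀ a ∈ Al, ν a < ν 1) → M.Sat w ν) := by
  unfold hypF
  induction Al with
  | nil => simp
  | cons a l ih =>
      simp only [List.foldr_cons, FO.Sat, ih, List.mem_cons]
      constructor
      · rintro (h | h) hall
        · exact absurd (hall a (Or.inl rfl)) h
        · exact h fun b hb => hall b (Or.inr hb)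
      · intro h
        by_cases ha : ν a < ν 1
        · refine Or.inr fun hall => h ?_
          rintro b (rfl | hb)
          exacts [ha, hall b hb]
        · exact Or.inl ha

lemma exsF_elim {w : List A} {f : FO A} : ∀ (l : List ℕ) (ν : ℕ → ℕ),
    (exsF l f).Sat w ν →
      ∃ ν' : ℕ → ℕ, (∀ x, x ∉ l → ν' x = ν x) ∧ (∀ i ∈ l, ν' i < w.length) ∧ f.Sat w ν' := by
  intro l
  induction l with
  | nil => intro ν h; exact ⟨ν, fun x _ => rfl, by simp, h⟩
  | cons a l ih =>
      intro ν h
      obtain ⟨p, hp, hsat⟩ := h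
      obtain ⟨ν', hoff, hlt, hs⟩ := ih _ hsat
      refine ⟨ν', fun x hx => ?_, fun i hi => ?_, hs⟩
      · rw [hoff x fun hc => hx (List.mem_cons_of_mem _ hc)]
        exact Function.update_of_ne (fun hc => hx (by rw [hc]; exact List.mem_cons_self)) _ _
      · rcases List.mem_cons.1 hi with rfl | hi
        · by_cases hmem : i ∈ l
          · exact hlt i hmem
          · rw [hoff i hmem, Function.update_self]; exact hp
        · exact hlt i hi

lemma exsF_intro {w : List A} {f : FO A} : ∀ (l : List ℕ), l.Nodup → ∀ (ν g : ℕ → ℕ),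
    (∀ i ∈ l, g i < w.length) →
    (∀ ν' : ℕ → ℕ, (∀ i ∈ l, ν' i = g i) → (∀ x, x ∉ l → ν' x = ν x) → f.Sat w ν') →
    (exsF l f).Sat w ν := by
  intro l
  induction l with
  | nil =>
      intro _ ν g _ h
      exact h ν (by simp) fun x _ => rfl
  | cons a l ih =>
      intro hnd ν g hg h
      refine ⟨g a, hg a (List.mem_cons_self), ?_⟩
      refine ih hnd.of_cons (Function.update ν a (g a)) g
        (fun i hi => hg i (List.mem_cons_of_mem _ hi)) ?_
      intro ν' h1 h2
      refine h ν' ?_ ?_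
      · rintro i hi
        rcases List.mem_cons.1 hi with rfl | hi
        · rw [h2 i (List.Nodup.notMem hnd), Function.update_self]
        · exact h1 i hi
      · intro x hx
        rw [h2 x fun hc => hx (List.mem_cons_of_mem _ hc)]
        exact Function.update_of_ne (fun hc => hx (by rw [hc]; exact List.mem_cons_self)) _ _

end Aux6
section Aux7
open Classical
variable {A : Type*}

lemma staleG {W : List A} {m b : ℕ} (hm : 1 ≤ m) (hbm : b + m = W.length)
    {X : FO A} {S : Set ℕ} :
    ∀ (f : FO A) (E Al : List ℕ) (ν' : ℕ → ℕ),
    f.SB → (∀ x ∈ f.bset, m + 2 ≤ x) →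
    (∀ x ∈ S, x ∉ f.bset) →
    (∀ ρ : ℕ → ℕ, (∀ x ∈ S, ρ x = ν' x) → X.Sat W ρ) →
    (∀ i, 1 ≤ i → i ≤ m → ν' i = b + (i - 1)) →
    ∀ a ∈ Al, a ∉ f.bset → ¬ (ν' a < ν' 1) → (Gt m X f E Al).Sat W ν' := by
  have hW : 0 < W.length := by omega
  intro f
  induction f with
  | ex v f ih =>
      intro E Al ν' hSB hB hSb hX hY a ha hab hanot
      have hv2 : m + 2 ≤ v := hB v (Set.mem_insert _ _)
      have hvb : ∀ x, x ∈ f.bset ∨ x ∈ S ∨ x ≤ m ∨ x = a → x ≠ v := by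
        rintro x (hx | hx | hx | rfl) hc
        · exact absurd (hc ▸ hx) (fun hh => lt_irrefl v (hSB.1 v hh))
        · exact hSb x hx (hc ▸ Set.mem_insert _ _)
        · omega
        · exact hab (hc ▸ Set.mem_insert _ _)
      refine ⟨0, hW, ?_⟩
      refine ih (v::E) Al (Function.update ν' v 0) hSB.2 (fun x hx => hB x (Set.mem_insert_of_mem _ hx))
        (fun x hx hc => hSb x hx (Set.mem_insert_of_mem _ hc))
        (fun ρ hρ => hX ρ fun x hx => by
          rw [hρ x hx, Function.update_of_ne (hvb x (Or.inr (Or.inl hx)))])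
        (fun i h1 h2 => by
          rw [Function.update_of_ne (hvb i (Or.inr (Or.inr (Or.inl h2))))]; exact hY i h1 h2)
        a ha (fun hc => hab (Set.mem_insert_of_mem _ hc)) ?_
      rw [Function.update_of_ne (hvb a (Or.inr (Or.inr (Or.inr rfl)))),
        Function.update_of_ne (hvb 1 (Or.inr (Or.inr (Or.inl hm))))]
      exact hanot
  | all v f ih =>
      intro E Al ν' hSB hB hSb hX hY a ha hab hanot
      have hv2 : m + 2 ≤ v := hB v (Set.mem_insert _ _)
      have hvb : ∀ x, x ∈ f.bset ∨ x ∈ S ∨ x ≤ m ∨ x = a → x ≠ v := by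
        rintro x (hx | hx | hx | rfl) hc
        · exact absurd (hc ▸ hx) (fun hh => lt_irrefl v (hSB.1 v hh))
        · exact hSb x hx (hc ▸ Set.mem_insert _ _)
        · omega
        · exact hab (hc ▸ Set.mem_insert _ _)
      intro p hp
      refine ih E (v::Al) (Function.update ν' v p) hSB.2 (fun x hx => hB x (Set.mem_insert_of_mem _ hx))
        (fun x hx hc => hSb x hx (Set.mem_insert_of_mem _ hc))
        (fun ρ hρ => hX ρ fun x hx => by
          rw [hρ x hx, Function.update_of_ne (hvb x (Or.inr (Or.inl hx)))])
        (fun i h1 h2 => by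
          rw [Function.update_of_ne (hvb i (Or.inr (Or.inr (Or.inl h2))))]; exact hY i h1 h2)
        a (List.mem_cons_of_mem _ ha) (fun hc => hab (Set.mem_insert_of_mem _ hc)) ?_
      rw [Function.update_of_ne (hvb a (Or.inr (Or.inr (Or.inr rfl)))),
        Function.update_of_ne (hvb 1 (Or.inr (Or.inr (Or.inl hm))))]
      exact hanot
  | _ =>
      intro E Al ν' hSB hB hSb hX hY a ha hab hanot
      refine ⟨chainF_sat_iff.2 fun i h1 h2 => ?_, hX ν' fun x _ => rfl, ?_⟩
      · rw [hY i h1 (by omega), hY (i+1) (by omega) h2]; omega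
      · exact hypF_sat_iff.2 fun hall => absurd (hall a ha) hanot

lemma fwdG {W : List A} {m b : ℕ} (hm : 1 ≤ m) (hbm : b + m = W.length)
    {X : FO A} {S : Set ℕ} :
    ∀ (f : FO A) (E Al : List ℕ) (ν ν' : ℕ → ℕ),
    f.Prenex → f.SB → (∀ x ∈ f.bset, m + 2 ≤ x) →
    (∀ a ∈ E, a ∉ f.bset) →
    (∀ x ∈ S, x ∉ f.bset) →
    (∀ ρ : ℕ → ℕ, (∀ x ∈ S, ρ x = ν' x) → X.Sat W ρ) →
    (∀ v ∈ f.free, ν v = ν' v ∧ ν v < b) →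
    (∀ a ∈ E, ν' a < b) →
    (∀ i, 1 ≤ i → i ≤ m → ν' i = b + (i - 1)) →
    f.Sat (W.take b) ν → (Gt m X f E Al).Sat W ν' := by
  have hbW : b ≤ W.length := by omega
  have htl : (W.take b).length = b := by simp [List.length_take, Nat.min_eq_left hbW]
  intro f
  induction f with
  | ex v f ih =>
      intro E Al ν ν' hP hSB hB hEb hSb hX hfree hE hY hs
      obtain ⟨p, hp, hsat⟩ := hs
      rw [htl] at hp
      have hv2 : m + 2 ≤ v := hB v (Set.mem_insert _ _)
      have hvb : ∀ x, x ∈ f.bset ∨ x ∈ S ∨ x ≤ m ∨ x ∈ E → x ≠ v := by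
        rintro x (hx | hx | hx | hx) hc
        · exact absurd (hc ▸ hx) (fun hh => lt_irrefl v (hSB.1 v hh))
        · exact hSb x hx (hc ▸ Set.mem_insert _ _)
        · omega
        · exact hEb x hx (hc ▸ Set.mem_insert _ _)
      refine ⟨p, by omega, ?_⟩
      refine ih (v::E) Al (Function.update ν v p) (Function.update ν' v p) hP hSB.2 (fun x hx => hB x (Set.mem_insert_of_mem _ hx))
        ?_ (fun x hx hc => hSb x hx (Set.mem_insert_of_mem _ hc))
        (fun ρ hρ => hX ρ fun x hx => by
          rw [hρ x hx, Function.update_of_ne (hvb x (Or.inr (Or.inl hx)))])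
        ?_ ?_
        (fun i h1 h2 => by
          rw [Function.update_of_ne (hvb i (Or.inr (Or.inr (Or.inl h2))))]; exact hY i h1 h2)
        hsat
      · rintro x hx
        rcases List.mem_cons.1 hx with rfl | hx
        · exact fun hc => lt_irrefl x (hSB.1 x hc)
        · exact fun hc => hEb x hx (Set.mem_insert_of_mem _ hc)
      · intro x hx
        rcases eq_or_ne x v with rfl | hxv
        · simp [Function.update_self]; exact hp
        · rw [Function.update_of_ne hxv, Function.update_of_ne hxv]
          exact hfree x ⟨hx, hxv⟩
      · intro x hx
        rcases List.mem_cons.1 hx with rfl | hx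
        · rw [Function.update_self]; exact hp
        · rw [Function.update_of_ne (hvb x (Or.inr (Or.inr (Or.inr hx))))]
          exact hE x hx
  | all v f ih =>
      intro E Al ν ν' hP hSB hB hEb hSb hX hfree hE hY hs
      have hv2 : m + 2 ≤ v := hB v (Set.mem_insert _ _)
      have hvb : ∀ x, x ∈ f.bset ∨ x ∈ S ∨ x ≤ m ∨ x ∈ E → x ≠ v := by
        rintro x (hx | hx | hx | hx) hc
        · exact absurd (hc ▸ hx) (fun hh => lt_irrefl v (hSB.1 v hh))
        · exact hSb x hx (hc ▸ Set.mem_insert _ _)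
        · omega
        · exact hEb x hx (hc ▸ Set.mem_insert _ _)
      intro p hp
      by_cases hpb : p < b
      · refine ih E (v::Al) (Function.update ν v p) (Function.update ν' v p) hP hSB.2 (fun x hx => hB x (Set.mem_insert_of_mem _ hx))
          (fun x hx hc => hEb x hx (Set.mem_insert_of_mem _ hc))
          (fun x hx hc => hSb x hx (Set.mem_insert_of_mem _ hc))
          (fun ρ hρ => hX ρ fun x hx => by
            rw [hρ x hx, Function.update_of_ne (hvb x (Or.inr (Or.inl hx)))])
          ?_
          (fun a ha => by
            rw [Function.update_of_ne (hvb a (Or.inr (Or.inr (Or.inr ha))))]; exact hE a ha)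
          (fun i h1 h2 => by
            rw [Function.update_of_ne (hvb i (Or.inr (Or.inr (Or.inl h2))))]; exact hY i h1 h2)
          (hs p (by omega))
        · intro x hx
          rcases eq_or_ne x v with rfl | hxv
          · simp [Function.update_self]; exact hpb
          · rw [Function.update_of_ne hxv, Function.update_of_ne hxv]
            exact hfree x ⟨hx, hxv⟩
      · refine staleG hm hbm f E (v::Al) (Function.update ν' v p) hSB.2
          (fun x hx => hB x (Set.mem_insert_of_mem _ hx))
          (fun x hx hc => hSb x hx (Set.mem_insert_of_mem _ hc))
          (fun ρ hρ => hX ρ fun x hx => by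
            rw [hρ x hx, Function.update_of_ne (hvb x (Or.inr (Or.inl hx)))])
          (fun i h1 h2 => by
            rw [Function.update_of_ne (hvb i (Or.inr (Or.inr (Or.inl h2))))]; exact hY i h1 h2)
          v (List.mem_cons_self)
          (fun hc => lt_irrefl v (hSB.1 v hc)) ?_
        rw [Function.update_self, Function.update_of_ne (hvb 1 (Or.inr (Or.inr (Or.inl hm))))]
        rw [hY 1 le_rfl hm]
        omega
  | _ =>
      intro E Al ν ν' hP hSB hB hEb hSb hX hfree hE hY hs
      have hQF : FO.QF _ := hP
      have h1b : ν' 1 = b := by have := hY 1 le_rfl hm; simpa using this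
      refine ⟨chainF_sat_iff.2 fun i h1 h2 => ?_, hX ν' fun x _ => rfl, ?_⟩
      · rw [hY i h1 (by omega), hY (i+1) (by omega) h2]; omega
      · refine hypF_sat_iff.2 fun _ => guardsF_sat_iff.2 ⟨fun a ha => ?_, ?_⟩
        · rw [h1b]; exact hE a ha
        · have hsW := (FO.qf_take hbW hQF fun v hv => (hfree v hv).2).1 hs
          exact (FO.Sat_congr fun v hv => (hfree v hv).1).1 hsW

end Aux7
section Aux8
open Classical
variable {A : Type*}

lemma fwdT {W : List A} {m b : ℕ} (hm : 1 ≤ m) (hbm : b + m = W.length) :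
    ∀ (f : FO A) (E : List ℕ) (ν ν' : ℕ → ℕ),
    f.Prenex → f.SB → (∀ x ∈ f.bset, m + 2 ≤ x) →
    (∀ a ∈ E, a ∉ f.bset) →
    (∀ v ∈ f.free, ν v = ν' v ∧ ν v < b) →
    (∀ a ∈ E, ν' a < b) →
    (∀ i, 1 ≤ i → i ≤ m → ν' i = b + (i - 1)) →
    f.Sat (W.take b) ν → (Tt m f E).Sat W ν' := by
  have hbW : b ≤ W.length := by omega
  have htl : (W.take b).length = b := by simp [List.length_take, Nat.min_eq_left hbW]
  intro f
  induction f with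
  | ex v f ih =>
      intro E ν ν' hP hSB hB hEb hfree hE hY hs
      obtain ⟨p, hp, hsat⟩ := hs
      rw [htl] at hp
      have hv2 : m + 2 ≤ v := hB v (Set.mem_insert _ _)
      have hvb : ∀ x, x ∈ f.bset ∨ x ≤ m ∨ x ∈ E → x ≠ v := by
        rintro x (hx | hx | hx) hc
        · exact absurd (hc ▸ hx) (fun hh => lt_irrefl v (hSB.1 v hh))
        · omega
        · exact hEb x hx (hc ▸ Set.mem_insert _ _)
      refine ⟨p, by omega, ?_⟩
      refine ih (v::E) (Function.update ν v p) (Function.update ν' v p) hP hSB.2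
        (fun x hx => hB x (Set.mem_insert_of_mem _ hx)) ?_ ?_ ?_
        (fun i h1 h2 => by
          rw [Function.update_of_ne (hvb i (Or.inr (Or.inl h2)))]; exact hY i h1 h2)
        hsat
      · rintro x hx
        rcases List.mem_cons.1 hx with rfl | hx
        · exact fun hc => lt_irrefl x (hSB.1 x hc)
        · exact fun hc => hEb x hx (Set.mem_insert_of_mem _ hc)
      · intro x hx
        rcases eq_or_ne x v with rfl | hxv
        · rw [Function.update_self, Function.update_self]; exact ⟨rfl, hp⟩
        · rw [Function.update_of_ne hxv, Function.update_of_ne hxv]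
          exact hfree x ⟨hx, hxv⟩
      · intro x hx
        rcases List.mem_cons.1 hx with rfl | hx
        · rw [Function.update_self]; exact hp
        · rw [Function.update_of_ne (hvb x (Or.inr (Or.inr hx)))]
          exact hE x hx
  | all v f ih =>
      intro E ν ν' hP hSB hB hEb hfree hE hY hs
      have hv2 : m + 2 ≤ v := hB v (Set.mem_insert _ _)
      have hvb : ∀ x, x ∈ f.bset ∨ x ≤ m ∨ x ∈ E → x ≠ v := by
        rintro x (hx | hx | hx) hc
        · exact absurd (hc ▸ hx) (fun hh => lt_irrefl v (hSB.1 v hh))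
        · omega
        · exact hEb x hx (hc ▸ Set.mem_insert _ _)
      intro p hp
      have hSmem : ∀ x, (x = v ∨ (1 ≤ x ∧ x ≤ m)) ↔
          x ∈ (insert v {y | 1 ≤ y ∧ y ≤ m} : Set ℕ) := by
        intro x; simp [Set.mem_insert_iff]
      have hSb : ∀ x ∈ (insert v {y | 1 ≤ y ∧ y ≤ m} : Set ℕ), x ∉ f.bset := by
        intro x hx hc
        rcases ((hSmem x).2 hx) with rfl | hx
        · exact lt_irrefl x (hSB.1 x hc)
        · have := hB x (Set.mem_insert_of_mem _ hc); omega
      have h1b : ν' 1 = b := by have := hY 1 le_rfl hm; simpa using this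
      have hX : ∀ ρ : ℕ → ℕ,
          (∀ x ∈ (insert v {y | 1 ≤ y ∧ y ≤ m} : Set ℕ), ρ x = Function.update ν' v p x) →
          (pinF A m v).Sat W ρ := by
        intro ρ hρ
        have hρv : ρ v = p := by
          rw [hρ v (Set.mem_insert _ _), Function.update_self]
        have hρi : ∀ i, 1 ≤ i → i ≤ m → ρ i = b + (i - 1) := by
          intro i g1 g2
          rw [hρ i (Set.mem_insert_of_mem _ ⟨g1, g2⟩),
            Function.update_of_ne (by omega : i ≠ v)]
          exact hY i g1 g2
        refine pinF_sat_iff.2 ?_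
        by_cases hpb : p < b
        · left
          rw [hρv, hρi 1 le_rfl hm]
          omega
        · right
          refine ⟨p - b + 1, by omega, by omega, ?_⟩
          rw [hρv, hρi (p - b + 1) (by omega) (by omega)]
          omega
      by_cases hpb : p < b
      · refine fwdG hm hbm f E [v] (Function.update ν v p) (Function.update ν' v p)
          hP hSB.2 (fun x hx => hB x (Set.mem_insert_of_mem _ hx))
          (fun a ha hc => hEb a ha (Set.mem_insert_of_mem _ hc))
          hSb hX ?_
          (fun a ha => by
            rw [Function.update_of_ne (hvb a (Or.inr (Or.inr ha)))]; exact hE a ha)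
          (fun i h1 h2 => by
            rw [Function.update_of_ne (hvb i (Or.inr (Or.inl h2)))]; exact hY i h1 h2)
          (hs p (by omega))
        intro x hx
        rcases eq_or_ne x v with rfl | hxv
        · rw [Function.update_self, Function.update_self]; exact ⟨rfl, hpb⟩
        · rw [Function.update_of_ne hxv, Function.update_of_ne hxv]
          exact hfree x ⟨hx, hxv⟩
      · refine staleG hm hbm f E [v] (Function.update ν' v p) hSB.2
          (fun x hx => hB x (Set.mem_insert_of_mem _ hx))
          hSb hX
          (fun i h1 h2 => by
            rw [Function.update_of_ne (hvb i (Or.inr (Or.inl h2)))]; exact hY i h1 h2)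
          v (List.mem_cons_self)
          (fun hc => lt_irrefl v (hSB.1 v hc)) ?_
        rw [Function.update_self, Function.update_of_ne (by omega : (1:ℕ) ≠ v), h1b]
        omega
  | _ =>
      intro E ν ν' hP hSB hB hEb hfree hE hY hs
      have hQF : FO.QF _ := hP
      have h1b : ν' 1 = b := by have := hY 1 le_rfl hm; simpa using this
      refine ⟨chainF_sat_iff.2 fun i g1 g2 => ?_, guardsF_sat_iff.2 ⟨fun a ha => ?_, ?_⟩⟩
      · rw [hY i g1 (by omega), hY (i+1) (by omega) g2]; omega
      · rw [h1b]; exact hE a ha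
      · have hsW := (FO.qf_take hbW hQF fun v hv => (hfree v hv).2).1 hs
        exact (FO.Sat_congr fun v hv => (hfree v hv).1).1 hsW

lemma fwd_main {w u : List A} (hm : 1 ≤ u.length) {f : FO A}
    (hP : f.Prenex) (hSB : f.SB)
    (hB : ∀ x ∈ f.bset, u.length + 2 ≤ x) (hfr : f.free = ∅) {ν : ℕ → ℕ}
    (hs : f.Sat w ν) :
    (exsF (List.range' 1 u.length) (Tt u.length f [])).Sat (w ++ u) ν := by
  set m := u.length
  set b := w.length
  have hbm : b + m = (w ++ u).length := by simp [b, m]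
  refine exsF_intro _ (by exact List.nodup_range' (s := 1) (n := m)) ν (fun i => b + (i - 1)) ?_ ?_
  · intro i hi
    rw [List.mem_range'_1] at hi
    simp only [List.length_append]
    omega
  · intro ν' h1 h2
    refine fwdT hm hbm f [] ν ν' hP hSB hB (by simp) ?_ (by simp) ?_ ?_
    · intro v hv
      rw [hfr] at hv
      exact absurd hv (Set.notMem_empty v)
    · intro i g1 g2
      exact h1 i (by rw [List.mem_range'_1]; omega)
    · rw [List.take_left]
      exact hs

end Aux8
section Aux9
open Classical
variable {A : Type*}

/-- Extract a guard for an accumulated existential variable from `Gt`. -/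
lemma exG {W : List A} {m : ℕ} {X : FO A} (hW : 0 < W.length) :
    ∀ (f : FO A) (E Al : List ℕ) (ρ : ℕ → ℕ),
    f.SB → (∀ x ∈ f.bset, m + 2 ≤ x) → 1 ≤ m →
    (∀ a' ∈ Al, a' ∉ f.bset) →
    (∀ a' ∈ Al, ρ a' < ρ 1) → 0 < ρ 1 →
    ∀ a ∈ E, a ∉ f.bset → (Gt m X f E Al).Sat W ρ → ρ a < ρ 1 := by
  intro f
  induction f with
  | ex v f ih =>
      intro E Al ρ hSB hB hm hAb hA h0 a ha hab hsat
      obtain ⟨p, hp, hsat⟩ := hsat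
      have hv2 : m + 2 ≤ v := hB v (Set.mem_insert _ _)
      have hvb : ∀ x, x ∈ f.bset ∨ x ∈ Al ∨ x ≤ m ∨ x = a → x ≠ v := by
        rintro x (hx | hx | hx | rfl) hc
        · exact absurd (hc ▸ hx) fun hh => lt_irrefl v (hSB.1 v hh)
        · exact hAb x hx (hc ▸ Set.mem_insert _ _)
        · omega
        · exact hab (hc ▸ Set.mem_insert _ _)
      have := ih (v::E) Al (Function.update ρ v p) hSB.2
        (fun x hx => hB x (Set.mem_insert_of_mem _ hx)) hm
        (fun a' ha' hc => hAb a' ha' (Set.mem_insert_of_mem _ hc))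
        (fun a' ha' => by
          rw [Function.update_of_ne (hvb a' (Or.inr (Or.inl ha'))),
            Function.update_of_ne (hvb 1 (Or.inr (Or.inr (Or.inl hm))))]
          exact hA a' ha')
        (by rw [Function.update_of_ne (hvb 1 (Or.inr (Or.inr (Or.inl hm))))]; exact h0)
        a (List.mem_cons_of_mem _ ha) (fun hc => hab (Set.mem_insert_of_mem _ hc)) hsat
      rwa [Function.update_of_ne (hvb a (Or.inr (Or.inr (Or.inr rfl)))),
        Function.update_of_ne (hvb 1 (Or.inr (Or.inr (Or.inl hm))))] at this
  | all v f ih =>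
      intro E Al ρ hSB hB hm hAb hA h0 a ha hab hsat
      have hv2 : m + 2 ≤ v := hB v (Set.mem_insert _ _)
      have hvb : ∀ x, x ∈ f.bset ∨ x ∈ Al ∨ x ≤ m ∨ x = a → x ≠ v := by
        rintro x (hx | hx | hx | rfl) hc
        · exact absurd (hc ▸ hx) fun hh => lt_irrefl v (hSB.1 v hh)
        · exact hAb x hx (hc ▸ Set.mem_insert _ _)
        · omega
        · exact hab (hc ▸ Set.mem_insert _ _)
      have h1v : (1:ℕ) ≠ v := hvb 1 (Or.inr (Or.inr (Or.inl hm)))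
      have := ih E (v::Al) (Function.update ρ v 0) hSB.2
        (fun x hx => hB x (Set.mem_insert_of_mem _ hx)) hm
        ?_ ?_
        (by rw [Function.update_of_ne h1v]; exact h0)
        a ha (fun hc => hab (Set.mem_insert_of_mem _ hc)) (hsat 0 hW)
      · rwa [Function.update_of_ne (hvb a (Or.inr (Or.inr (Or.inr rfl)))),
          Function.update_of_ne h1v] at this
      · rintro a' ha'
        rcases List.mem_cons.1 ha' with rfl | ha'
        · exact fun hc => lt_irrefl a' (hSB.1 a' hc)
        · exact fun hc => hAb a' ha' (Set.mem_insert_of_mem _ hc)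
      · rintro a' ha'
        rcases List.mem_cons.1 ha' with rfl | ha'
        · rw [Function.update_self, Function.update_of_ne h1v]; exact h0
        · rw [Function.update_of_ne (hvb a' (Or.inr (Or.inl ha'))),
            Function.update_of_ne h1v]
          exact hA a' ha'
  | _ =>
      intro E Al ρ hSB hB hm hAb hA h0 a ha hab hsat
      obtain ⟨-, -, hyp⟩ := hsat
      exact (guardsF_sat_iff.1 (hypF_sat_iff.1 hyp hA)).1 a ha

/-- Extract a guard for an accumulated existential variable from `Tt`. -/
lemma exT {W : List A} {m : ℕ} (hW : 0 < W.length) :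
    ∀ (f : FO A) (E : List ℕ) (ρ : ℕ → ℕ),
    f.SB → (∀ x ∈ f.bset, m + 2 ≤ x) → 1 ≤ m →
    (f.hasAll → 0 < ρ 1) →
    ∀ a ∈ E, a ∉ f.bset → (Tt m f E).Sat W ρ → ρ a < ρ 1 := by
  intro f
  induction f with
  | ex v f ih =>
      intro E ρ hSB hB hm h0 a ha hab hsat
      obtain ⟨p, hp, hsat⟩ := hsat
      have hv2 : m + 2 ≤ v := hB v (Set.mem_insert _ _)
      have hvb : ∀ x, x ∈ f.bset ∨ x ≤ m ∨ x = a → x ≠ v := by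
        rintro x (hx | hx | rfl) hc
        · exact absurd (hc ▸ hx) fun hh => lt_irrefl v (hSB.1 v hh)
        · omega
        · exact hab (hc ▸ Set.mem_insert _ _)
      have h1v : (1:ℕ) ≠ v := hvb 1 (Or.inr (Or.inl hm))
      have := ih (v::E) (Function.update ρ v p) hSB.2
        (fun x hx => hB x (Set.mem_insert_of_mem _ hx)) hm
        (fun hall => by rw [Function.update_of_ne h1v]; exact h0 hall)
        a (List.mem_cons_of_mem _ ha) (fun hc => hab (Set.mem_insert_of_mem _ hc)) hsat
      rwa [Function.update_of_ne (hvb a (Or.inr (Or.inr rfl))),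
        Function.update_of_ne h1v] at this
  | all v f ih =>
      intro E ρ hSB hB hm h0 a ha hab hsat
      have hv2 : m + 2 ≤ v := hB v (Set.mem_insert _ _)
      have hvb : ∀ x, x ∈ f.bset ∨ x ≤ m ∨ x = a → x ≠ v := by
        rintro x (hx | hx | rfl) hc
        · exact absurd (hc ▸ hx) fun hh => lt_irrefl v (hSB.1 v hh)
        · omega
        · exact hab (hc ▸ Set.mem_insert _ _)
      have h1v : (1:ℕ) ≠ v := hvb 1 (Or.inr (Or.inl hm))
      have h0' := h0 trivial
      have := exG hW f E [v] (Function.update ρ v 0) hSB.2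
        (fun x hx => hB x (Set.mem_insert_of_mem _ hx)) hm
        ?_ ?_
        (by rw [Function.update_of_ne h1v]; exact h0')
        a ha (fun hc => hab (Set.mem_insert_of_mem _ hc)) (hsat 0 hW)
      · rwa [Function.update_of_ne (hvb a (Or.inr (Or.inr rfl))),
          Function.update_of_ne h1v] at this
      · rintro a' ha'
        rcases List.mem_cons.1 ha' with rfl | ha'
        · exact fun hc => lt_irrefl a' (hSB.1 a' hc)
        · exact absurd ha' List.not_mem_nil
      · rintro a' ha'
        rcases List.mem_cons.1 ha' with rfl | ha'
        · rw [Function.update_self, Function.update_of_ne h1v]; exact h0'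
        · exact absurd ha' List.not_mem_nil
  | _ =>
      intro E ρ hSB hB hm h0 a ha hab hsat
      exact (guardsF_sat_iff.1 hsat.2).1 a ha

/-- Extract the side formula `X` from `Gt`. -/
lemma xxG {W : List A} {m : ℕ} {X : FO A} {S : Set ℕ} (hW : 0 < W.length) :
    ∀ (f : FO A) (E Al : List ℕ) (ρ : ℕ → ℕ),
    f.SB → (∀ x ∈ f.bset, m + 2 ≤ x) →
    (∀ x ∈ S, x ∉ f.bset) →
    (Gt m X f E Al).Sat W ρ →
    ∃ ρ' : ℕ → ℕ, (∀ x ∈ S, ρ' x = ρ x) ∧ (chainF A m).Sat W ρ' ∧ X.Sat W ρ' := by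
  intro f
  induction f with
  | ex v f ih =>
      intro E Al ρ hSB hB hSb hsat
      obtain ⟨p, hp, hsat⟩ := hsat
      obtain ⟨ρ', hag, hX⟩ := ih (v::E) Al _ hSB.2
        (fun x hx => hB x (Set.mem_insert_of_mem _ hx))
        (fun x hx hc => hSb x hx (Set.mem_insert_of_mem _ hc)) hsat
      refine ⟨ρ', fun x hx => ?_, hX⟩
      rw [hag x hx, Function.update_of_ne fun hc => hSb x hx (by rw [hc]; exact Set.mem_insert _ _)]
  | all v f ih =>
      intro E Al ρ hSB hB hSb hsat
      obtain ⟨ρ', hag, hX⟩ := ih E (v::Al) _ hSB.2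
        (fun x hx => hB x (Set.mem_insert_of_mem _ hx))
        (fun x hx hc => hSb x hx (Set.mem_insert_of_mem _ hc)) (hsat 0 hW)
      refine ⟨ρ', fun x hx => ?_, hX⟩
      rw [hag x hx, Function.update_of_ne fun hc => hSb x hx (by rw [hc]; exact Set.mem_insert _ _)]
  | _ =>
      intro E Al ρ hSB hB hSb hsat
      exact ⟨ρ, fun x _ => rfl, hsat.1, hsat.2.1⟩

/-- Extract the chain from `Tt`. -/
lemma chT {W : List A} {m : ℕ} (hW : 0 < W.length) (hm : 1 ≤ m) :
    ∀ (f : FO A) (E : List ℕ) (ρ : ℕ → ℕ),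
    f.SB → (∀ x ∈ f.bset, m + 2 ≤ x) →
    (Tt m f E).Sat W ρ → (chainF A m).Sat W ρ := by
  intro f
  induction f with
  | ex v f ih =>
      intro E ρ hSB hB hsat
      obtain ⟨p, hp, hsat⟩ := hsat
      have := ih (v::E) _ hSB.2 (fun x hx => hB x (Set.mem_insert_of_mem _ hx)) hsat
      refine (FO.Sat_congr fun x hx => ?_).1 this
      have hx' := chainF_free hm hx
      have hv2 : m + 2 ≤ v := hB v (Set.mem_insert _ _)
      exact Function.update_of_ne (by simp only [Set.mem_setOf_eq] at hx'; omega) _ _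
  | all v f ih =>
      intro E ρ hSB hB hsat
      have hv2 : m + 2 ≤ v := hB v (Set.mem_insert _ _)
      obtain ⟨ρ', hag, hch, -⟩ := xxG (X := pinF A m v) (S := {x | 1 ≤ x ∧ x ≤ m}) hW f E [v]
        (Function.update ρ v 0) hSB.2 (fun x hx => hB x (Set.mem_insert_of_mem _ hx))
        (fun x hx hc => by
          simp only [Set.mem_setOf_eq] at hx
          have := hB x (Set.mem_insert_of_mem _ hc)
          omega)
        (hsat 0 hW)
      refine (FO.Sat_congr fun x hx => ?_).1 hch
      have hx' := chainF_free hm hx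
      simp only [Set.mem_setOf_eq] at hx'
      rw [hag x hx', Function.update_of_ne (by omega)]
  | _ =>
      intro E ρ hSB hB hsat
      exact hsat.1

end Aux9
section Aux10
open Classical
variable {A : Type*}

/-- Extract the pin property from `Tt` when there is a universal quantifier. -/
lemma pixT {W : List A} {m : ℕ} (hW : 0 < W.length) (hm : 1 ≤ m) :
    ∀ (f : FO A) (E : List ℕ) (ρ : ℕ → ℕ),
    f.SB → (∀ x ∈ f.bset, m + 2 ≤ x) → f.hasAll →
    (Tt m f E).Sat W ρ →
    ∀ p, p < W.length → p < ρ 1 ∨ ∃ i, 1 ≤ i ∧ i ≤ m ∧ p = ρ i := by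
  intro f
  induction f with
  | ex v f ih =>
      intro E ρ hSB hB hall hsat p hp
      obtain ⟨q, hq, hsat⟩ := hsat
      have hv2 : m + 2 ≤ v := hB v (Set.mem_insert _ _)
      have := ih (v::E) _ hSB.2 (fun x hx => hB x (Set.mem_insert_of_mem _ hx)) hall hsat p hp
      rcases this with h | ⟨i, h1, h2, h3⟩
      · rw [Function.update_of_ne (by omega : (1:ℕ) ≠ v)] at h
        exact Or.inl h
      · rw [Function.update_of_ne (by omega : i ≠ v)] at h3
        exact Or.inr ⟨i, h1, h2, h3⟩
  | all v f ih =>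
      intro E ρ hSB hB hall hsat p hp
      have hv2 : m + 2 ≤ v := hB v (Set.mem_insert _ _)
      obtain ⟨ρ', hag, -, hpin⟩ := xxG (X := pinF A m v) (S := insert v {x | 1 ≤ x ∧ x ≤ m})
        hW f E [v] (Function.update ρ v p) hSB.2
        (fun x hx => hB x (Set.mem_insert_of_mem _ hx))
        (fun x hx hc => by
          rcases hx with rfl | hx
          · exact lt_irrefl x (hSB.1 x hc)
          · simp only [Set.mem_setOf_eq] at hx
            have := hB x (Set.mem_insert_of_mem _ hc)
            omega)
        (hsat p hp)
      have hρ'v : ρ' v = p := by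
        rw [hag v (Set.mem_insert _ _), Function.update_self]
      have hρ'i : ∀ i, 1 ≤ i → i ≤ m → ρ' i = ρ i := by
        intro i g1 g2
        rw [hag i (Set.mem_insert_of_mem _ ⟨g1, g2⟩), Function.update_of_ne (by omega)]
      rcases pinF_sat_iff.1 hpin with h | ⟨i, h1, h2, h3⟩
      · left
        rwa [hρ'v, hρ'i 1 le_rfl hm] at h
      · right
        refine ⟨i, h1, h2, ?_⟩
        rwa [hρ'v, hρ'i i h1 h2] at h3
  | _ =>
      intro E ρ hSB hB hall hsat p hp
      exact absurd hall (by simp [FO.hasAll])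

/-- Backward direction through `Gt`. -/
lemma bwdG {W : List A} {m b : ℕ} (hm : 1 ≤ m) (hbW : b ≤ W.length) (hW : 0 < W.length)
    (h0 : 0 < b) {X : FO A} :
    ∀ (f : FO A) (E Al : List ℕ) (ν ν' : ℕ → ℕ),
    f.Prenex → f.SB → (∀ x ∈ f.bset, m + 2 ≤ x) →
    (∀ a ∈ E, a ∉ f.bset) → (∀ a ∈ Al, a ∉ f.bset) →
    ν' 1 = b →
    (∀ a ∈ Al, ν' a < b) →
    (∀ v ∈ f.free, ν v = ν' v ∧ ν' v < b) →
    (Gt m X f E Al).Sat W ν' → f.Sat (W.take b) ν := by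
  have htl : (W.take b).length = b := by simp [List.length_take, Nat.min_eq_left hbW]
  intro f
  induction f with
  | ex v f ih =>
      intro E Al ν ν' hP hSB hB hEb hAb h1 hA hfree hsat
      obtain ⟨p, hp, hsat⟩ := hsat
      have hv2 : m + 2 ≤ v := hB v (Set.mem_insert _ _)
      have hvb : ∀ x, x ∈ f.bset ∨ x ∈ Al ∨ x ≤ m → x ≠ v := by
        rintro x (hx | hx | hx) hc
        · exact absurd (hc ▸ hx) fun hh => lt_irrefl v (hSB.1 v hh)
        · exact hAb x hx (hc ▸ Set.mem_insert _ _)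
        · omega
      have h1v : (1:ℕ) ≠ v := hvb 1 (Or.inr (Or.inr hm))
      have hpb : p < b := by
        have := exG hW f (v::E) Al (Function.update ν' v p) hSB.2
          (fun x hx => hB x (Set.mem_insert_of_mem _ hx)) hm
          (fun a' ha' hc => hAb a' ha' (Set.mem_insert_of_mem _ hc))
          (fun a' ha' => by
            rw [Function.update_of_ne (hvb a' (Or.inr (Or.inl ha'))),
              Function.update_of_ne h1v, h1]
            exact hA a' ha')
          (by rw [Function.update_of_ne h1v, h1]; exact h0)
          v (List.mem_cons_self) (fun hc => lt_irrefl v (hSB.1 v hc)) hsat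
        rwa [Function.update_self, Function.update_of_ne h1v, h1] at this
      refine ⟨p, by omega, ?_⟩
      refine ih (v::E) Al (Function.update ν v p) (Function.update ν' v p) hP hSB.2
        (fun x hx => hB x (Set.mem_insert_of_mem _ hx)) ?_
        (fun a ha hc => hAb a ha (Set.mem_insert_of_mem _ hc))
        (by rw [Function.update_of_ne h1v]; exact h1)
        (fun a ha => by
          rw [Function.update_of_ne (hvb a (Or.inr (Or.inl ha)))]; exact hA a ha)
        ?_ hsat
      · rintro x hx
        rcases List.mem_cons.1 hx with rfl | hx
        · exact fun hc => lt_irrefl x (hSB.1 x hc)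
        · exact fun hc => hEb x hx (Set.mem_insert_of_mem _ hc)
      · intro x hx
        rcases eq_or_ne x v with rfl | hxv
        · rw [Function.update_self, Function.update_self]; exact ⟨rfl, hpb⟩
        · rw [Function.update_of_ne hxv, Function.update_of_ne hxv]
          exact hfree x ⟨hx, hxv⟩
  | all v f ih =>
      intro E Al ν ν' hP hSB hB hEb hAb h1 hA hfree hsat
      have hv2 : m + 2 ≤ v := hB v (Set.mem_insert _ _)
      have hvb : ∀ x, x ∈ f.bset ∨ x ∈ Al ∨ x ≤ m → x ≠ v := by
        rintro x (hx | hx | hx) hc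
        · exact absurd (hc ▸ hx) fun hh => lt_irrefl v (hSB.1 v hh)
        · exact hAb x hx (hc ▸ Set.mem_insert _ _)
        · omega
      have h1v : (1:ℕ) ≠ v := hvb 1 (Or.inr (Or.inr hm))
      intro p hp
      rw [htl] at hp
      refine ih E (v::Al) (Function.update ν v p) (Function.update ν' v p) hP hSB.2
        (fun x hx => hB x (Set.mem_insert_of_mem _ hx))
        (fun a ha hc => hEb a ha (Set.mem_insert_of_mem _ hc)) ?_
        (by rw [Function.update_of_ne h1v]; exact h1) ?_ ?_ (hsat p (by omega))
      · rintro a ha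
        rcases List.mem_cons.1 ha with rfl | ha
        · exact fun hc => lt_irrefl a (hSB.1 a hc)
        · exact fun hc => hAb a ha (Set.mem_insert_of_mem _ hc)
      · rintro a ha
        rcases List.mem_cons.1 ha with rfl | ha
        · rw [Function.update_self]; exact hp
        · rw [Function.update_of_ne (hvb a (Or.inr (Or.inl ha)))]; exact hA a ha
      · intro x hx
        rcases eq_or_ne x v with rfl | hxv
        · rw [Function.update_self, Function.update_self]; exact ⟨rfl, hp⟩
        · rw [Function.update_of_ne hxv, Function.update_of_ne hxv]
          exact hfree x ⟨hx, hxv⟩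
  | _ =>
      intro E Al ν ν' hP hSB hB hEb hAb h1 hA hfree hsat
      have hQF : FO.QF _ := hP
      obtain ⟨-, -, hyp⟩ := hsat
      have hM := (guardsF_sat_iff.1 (hypF_sat_iff.1 hyp (fun a ha => by
        rw [h1]; exact hA a ha))).2
      have hMν := (FO.Sat_congr fun v hv => ((hfree v hv).1).symm).1 hM
      exact (FO.qf_take hbW hQF fun v hv => by
        rw [(hfree v hv).1]; exact (hfree v hv).2).2 hMν

/-- Backward direction through `Tt`. -/
lemma bwdT {W : List A} {m b : ℕ} (hm : 1 ≤ m) (hbW : b ≤ W.length) (hW : 0 < W.length) :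
    ∀ (f : FO A) (E : List ℕ) (ν ν' : ℕ → ℕ),
    f.Prenex → f.SB → (∀ x ∈ f.bset, m + 2 ≤ x) →
    (∀ a ∈ E, a ∉ f.bset) →
    ν' 1 = b →
    (f.hasAll → 0 < b) →
    (∀ v ∈ f.free, ν v = ν' v ∧ ν' v < b) →
    (Tt m f E).Sat W ν' → f.Sat (W.take b) ν := by
  have htl : (W.take b).length = b := by simp [List.length_take, Nat.min_eq_left hbW]
  intro f
  induction f with
  | ex v f ih =>
      intro E ν ν' hP hSB hB hEb h1 h0 hfree hsat
      obtain ⟨p, hp, hsat⟩ := hsat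
      have hv2 : m + 2 ≤ v := hB v (Set.mem_insert _ _)
      have h1v : (1:ℕ) ≠ v := by omega
      have hpb : p < b := by
        have := exT hW f (v::E) (Function.update ν' v p) hSB.2
          (fun x hx => hB x (Set.mem_insert_of_mem _ hx)) hm
          (fun hall => by rw [Function.update_of_ne h1v, h1]; exact h0 hall)
          v (List.mem_cons_self) (fun hc => lt_irrefl v (hSB.1 v hc)) hsat
        rwa [Function.update_self, Function.update_of_ne h1v, h1] at this
      refine ⟨p, by omega, ?_⟩
      refine ih (v::E) (Function.update ν v p) (Function.update ν' v p) hP hSB.2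
        (fun x hx => hB x (Set.mem_insert_of_mem _ hx)) ?_
        (by rw [Function.update_of_ne h1v]; exact h1) h0 ?_ hsat
      · rintro x hx
        rcases List.mem_cons.1 hx with rfl | hx
        · exact fun hc => lt_irrefl x (hSB.1 x hc)
        · exact fun hc => hEb x hx (Set.mem_insert_of_mem _ hc)
      · intro x hx
        rcases eq_or_ne x v with rfl | hxv
        · rw [Function.update_self, Function.update_self]; exact ⟨rfl, hpb⟩
        · rw [Function.update_of_ne hxv, Function.update_of_ne hxv]
          exact hfree x ⟨hx, hxv⟩
  | all v f ih =>
      intro E ν ν' hP hSB hB hEb h1 h0 hfree hsat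
      have hv2 : m + 2 ≤ v := hB v (Set.mem_insert _ _)
      have h1v : (1:ℕ) ≠ v := by omega
      intro p hp
      rw [htl] at hp
      refine bwdG hm hbW hW (by omega) f E [v]
        (Function.update ν v p) (Function.update ν' v p) hP hSB.2
        (fun x hx => hB x (Set.mem_insert_of_mem _ hx))
        (fun a ha hc => hEb a ha (Set.mem_insert_of_mem _ hc)) ?_
        (by rw [Function.update_of_ne h1v]; exact h1) ?_ ?_ (hsat p (by omega))
      · rintro a ha
        rcases List.mem_cons.1 ha with rfl | ha
        · exact fun hc => lt_irrefl a (hSB.1 a hc)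
        · exact absurd ha List.not_mem_nil
      · rintro a ha
        rcases List.mem_cons.1 ha with rfl | ha
        · rw [Function.update_self]; exact hp
        · exact absurd ha List.not_mem_nil
      · intro x hx
        rcases eq_or_ne x v with rfl | hxv
        · rw [Function.update_self, Function.update_self]; exact ⟨rfl, hp⟩
        · rw [Function.update_of_ne hxv, Function.update_of_ne hxv]
          exact hfree x ⟨hx, hxv⟩
  | _ =>
      intro E ν ν' hP hSB hB hEb h1 h0 hfree hsat
      have hQF : FO.QF _ := hP
      have hM := (guardsF_sat_iff.1 hsat.2).2
      have hMν := (FO.Sat_congr fun v hv => ((hfree v hv).1).symm).1 hM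
      exact (FO.qf_take hbW hQF fun v hv => by
        rw [(hfree v hv).1]; exact (hfree v hv).2).2 hMν

end Aux10
section Aux11
open Classical
variable {A : Type*}

lemma rank0_free : ∀ f : FO A, f.rank = 0 → f.free.Nonempty := by
  intro f
  induction f with
  | letter a v => intro _; exact ⟨v, rfl⟩
  | lt v v' => intro _; exact ⟨v, Or.inl rfl⟩
  | eq v v' => intro _; exact ⟨v, Or.inl rfl⟩
  | not f ih => intro h; exact ih h
  | or f g ihf ihg =>
      intro h
      simp only [FO.rank, Nat.max_eq_zero_iff] at h
      exact (ihf h.1).mono Set.subset_union_left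
  | and f g ihf ihg =>
      intro h
      simp only [FO.rank, Nat.max_eq_zero_iff] at h
      exact (ihf h.1).mono Set.subset_union_left
  | ex v f ih => intro h; simp [FO.rank] at h
  | all v f ih => intro h; simp [FO.rank] at h

/-- Purely existential prenex sentences are preserved by extensions. -/
lemma noAll_ext {t : List A} : ∀ (f : FO A), f.Prenex → ¬ f.hasAll →
    ∀ (b : ℕ) (ν : ℕ → ℕ), b ≤ t.length →
    (∀ v ∈ f.free, ν v < b) → f.Sat (t.take b) ν → f.Sat t ν := by
  intro f
  induction f with
  | ex v f ih =>
      intro hP hall b ν hb hfree hs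
      obtain ⟨p, hp, hsat⟩ := hs
      have htl : (t.take b).length = b := by simp [List.length_take, Nat.min_eq_left hb]
      rw [htl] at hp
      refine ⟨p, by omega, ?_⟩
      refine ih hP hall b _ hb ?_ hsat
      intro x hx
      rcases eq_or_ne x v with rfl | hxv
      · rw [Function.update_self]; exact hp
      · rw [Function.update_of_ne hxv]; exact hfree x ⟨hx, hxv⟩
  | all v f ih =>
      intro hP hall
      exact absurd trivial hall
  | _ =>
      intro hP hall b ν hb hfree hs
      exact (FO.qf_take hb hP hfree).1 hs

lemma chain_mono {w : List A} {ν : ℕ → ℕ} {m : ℕ} (h : (chainF A m).Sat w ν) :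
    ∀ j, 1 + j ≤ m → ν 1 + j ≤ ν (1 + j) := by
  intro j
  induction j with
  | zero => intro _; simp
  | succ j ih =>
      intro hj
      have hc := chainF_sat_iff.1 h (1 + j) (by omega) (by omega)
      have := ih (by omega)
      have e : 1 + (j + 1) = (1 + j) + 1 := by omega
      rw [e]
      omega

def lenF (A : Type*) (c : ℕ) : FO A := exsF (List.range' 1 c) (chainF A c)

lemma lenF_sig {n : ℕ} (c : ℕ) : FO.Sig (n+1) (lenF A c) :=
  exsF_sig (.ofQF (chainF_qf c)) _

lemma lenF_rank (c : ℕ) : (lenF A c).rank = c := by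
  rw [lenF, exsF_rank, chainF_rank, List.length_range']
  omega

lemma lenF_free {c : ℕ} (hc : 1 ≤ c) : (lenF A c).free = ∅ := by
  rw [Set.eq_empty_iff_forall_notMem]
  intro x hx
  obtain ⟨h1, h2⟩ := exsF_free hx
  have := chainF_free hc h1
  simp only [Set.mem_setOf_eq] at h2 this
  exact h2 (by rw [List.mem_range'_1]; omega)

lemma lenF_sat_of_le {w : List A} {c : ℕ} (hc : c ≤ w.length) (ν : ℕ → ℕ) :
    (lenF A c).Sat w ν := by
  refine exsF_intro _ (by exact List.nodup_range' (s := 1) (n := c)) ν (fun i => i - 1) ?_ ?_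
  · intro i hi
    rw [List.mem_range'_1] at hi
    show i - 1 < w.length
    omega
  · intro ν' h1 h2
    refine chainF_sat_iff.2 fun i g1 g2 => ?_
    rw [h1 i (by rw [List.mem_range'_1]; omega), h1 (i+1) (by rw [List.mem_range'_1]; omega)]
    show i - 1 < (i + 1) - 1
    omega

lemma le_of_lenF_sat {w : List A} {c : ℕ} (hc : 1 ≤ c) {ν : ℕ → ℕ}
    (h : (lenF A c).Sat w ν) : c ≤ w.length := by
  obtain ⟨ν', hoff, hlt, hch⟩ := exsF_elim _ ν h
  have hmono := chain_mono hch (c - 1) (by omega)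
  have hlast : ν' c < w.length := hlt c (by rw [List.mem_range'_1]; omega)
  have e : 1 + (c - 1) = c := by omega
  rw [e] at hmono
  omega

end Aux11
/-- For every `n ≥ 1`, `k, h ∈ ℕ` and words `w, w', u` with `|u| ≤ h`:
if `wu ≼_{k+h} w'u` (w.r.t. `Σ_n(<)`) then `w ≼ₖ w'`. -/
theorem sig_remove_suffix {A : Type*} (n : ℕ) (hn : 1 ≤ n) (k h : ℕ)
    (w w' u : List A) (hu : u.length ≤ h)
    (hle : SigLe n (k + h) (w ++ u) (w' ++ u)) :
    SigLe n k w w' := by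
  intro f hfSig hffree hfrank hfsat
  rcases Nat.eq_zero_or_pos k with rfl | hk
  · exact absurd hffree (rank0_free f (Nat.le_zero.1 hfrank)).ne_empty
  rcases eq_or_ne u [] with rfl | hu0
  · simp only [List.append_nil] at hle
    exact hle f hfSig hffree (hfrank.trans (by omega)) hfsat
  obtain ⟨n₀, rfl⟩ : ∃ n₀, n = n₀ + 1 := ⟨n - 1, by omega⟩
  set m := u.length with hmdef
  have hm : 1 ≤ m := List.length_pos_iff.2 hu0
  set σ : ℕ → ℕ := fun _ => 0 with hσdef
  have hσlt : ∀ v, σ v < m + 2 := fun v => by simp [hσdef]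
  set g : FO A := f.canon σ (m + 2) with hgdef
  have gSig : FO.Sig (n₀+1) g := (FO.canon_sig_pi _ f σ (m+2)).1 hfSig
  have gP : g.Prenex := (FO.sig_pi_prenex _ g).1 gSig
  have gSB : g.SB := FO.canon_SB f σ (m+2)
  have gB : ∀ x ∈ g.bset, m + 2 ≤ x := FO.canon_bset f σ (m+2)
  have gfree : g.free = ∅ := by
    rw [Set.eq_empty_iff_forall_notMem]
    intro x hx
    obtain ⟨y, hy, -⟩ := FO.canon_free f σ (m+2) hσlt hx
    rw [hffree] at hy
    exact hy
  have grank : g.rank = f.rank := FO.canon_rank f σ (m+2)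
  have gfree' : ∀ {b : ℕ} {ν ν' : ℕ → ℕ}, ∀ v ∈ g.free, ν v = ν' v ∧ ν' v < b := by
    intro b ν ν' v hv
    rw [gfree] at hv
    exact absurd hv (Set.notMem_empty v)
  have gsat_iff : ∀ t : List A, ((g.Sat t fun _ => 0) ↔ (f.Sat t fun _ => 0)) := fun t =>
    (FO.canon_sat f σ (m+2) hσlt (fun _ => 0)).trans (FO.Sat_congr fun v _ => rfl)
  set fstar : FO A := exsF (List.range' 1 m) (Tt m g []) with hfstar
  have starSig : FO.Sig (n₀+1) fstar := exsF_sig ((Tt_sig_pi (n₀+1) g []).1 gSig) _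
  have starfree : fstar.free = ∅ := by
    rw [Set.eq_empty_iff_forall_notMem]
    intro x hx
    obtain ⟨h1, h2⟩ := exsF_free hx
    rcases Tt_free hm g [] h1 with (hh | hh) | hh
    · rw [gfree] at hh; exact hh
    · simp only [Set.mem_setOf_eq, List.not_mem_nil] at hh
    · refine h2 ?_
      simp only [Set.mem_setOf_eq] at hh ⊢
      rw [List.mem_range'_1]
      omega
  have starrank : fstar.rank ≤ k + h := by
    rw [hfstar, exsF_rank, Tt_rank, grank, List.length_range']
    omega
  have starsatW : fstar.Sat (w ++ u) (fun _ => 0) :=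
    fwd_main hm gP gSB gB gfree ((gsat_iff w).2 hfsat)
  have starsatW' : fstar.Sat (w' ++ u) (fun _ => 0) :=
    hle fstar starSig starfree starrank starsatW
  obtain ⟨ν', hoff, hlt, hsatT⟩ := exsF_elim _ _ starsatW'
  have hLW' : (w' ++ u).length = w'.length + m := by simp [m]
  have hW'pos : 0 < (w' ++ u).length := by omega
  set b := ν' 1 with hbdef
  have hch : (chainF A m).Sat (w' ++ u) ν' := chT hW'pos hm g [] ν' gSB gB hsatT
  have hmono := chain_mono hch (m - 1) (by omega)
  have hνm : ν' m < (w' ++ u).length := hlt m (by rw [List.mem_range'_1]; omega)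
  have hble : b ≤ w'.length := by
    have e : 1 + (m - 1) = m := by omega
    rw [e] at hmono
    omega
  refine (gsat_iff w').1 ?_
  by_cases hall : g.hasAll
  · have pix := pixT hW'pos hm g [] ν' gSB gB hall hsatT
    have hsub : Finset.Ico b (w' ++ u).length ⊆ (Finset.Icc 1 m).image ν' := by
      intro p hp
      rw [Finset.mem_Ico] at hp
      rcases pix p hp.2 with hlt' | ⟨i, g1, g2, g3⟩
      · omega
      · exact Finset.mem_image.2 ⟨i, Finset.mem_Icc.2 ⟨g1, g2⟩, g3.symm⟩
    have hcard := (Finset.card_le_card hsub).trans Finset.card_image_le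
    rw [Nat.card_Ico] at hcard
    have hIcc : (Finset.Icc 1 m).card = m := by rw [Nat.card_Icc]; omega
    rw [hIcc] at hcard
    have hbeq : b = w'.length := by omega
    rcases Nat.eq_zero_or_pos b with hb0 | hbpos
    · have hw'0 : w'.length = 0 := by omega
      rcases Nat.eq_zero_or_pos w.length with hw0 | hwpos
      · have hww' : w = w' := by
          rw [List.length_eq_zero_iff.1 hw0, List.length_eq_zero_iff.1 hw'0]
        rw [← hww']
        exact (gsat_iff w).2 hfsat
      · exfalso
        have hsat1 : (lenF A (m+1)).Sat (w ++ u) (fun _ => 0) :=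
          lenF_sat_of_le (by simp only [List.length_append]; omega) _
        have hsat2 := hle (lenF A (m+1)) (lenF_sig _) (lenF_free (by omega))
          (by rw [lenF_rank]; omega) hsat1
        have := le_of_lenF_sat (by omega) hsat2
        omega
    · have hsatg := bwdT hm (by omega : b ≤ (w' ++ u).length) hW'pos g []
        (fun _ => 0) ν' gP gSB gB (by simp) hbdef.symm (fun _ => hbpos) gfree' hsatT
      rw [hbeq, List.take_left] at hsatg
      exact hsatg
  · have hsatg := bwdT hm (by omega : b ≤ (w' ++ u).length) hW'pos g []
      (fun _ => 0) ν' gP gSB gB (by simp) hbdef.symm (fun hc => absurd hc hall) gfree' hsatT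
    have htake : (w' ++ u).take b = w'.take b := by
      rw [List.take_append, show b - w'.length = 0 by omega]
      simp
    rw [htake] at hsatg
    exact noAll_ext g gP hall b _ hble (fun v hv => by
      rw [gfree] at hv; exact absurd hv (Set.notMem_empty v)) hsatg
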